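/- arXiv:1307.5642 — 2 statements merged into one kernel-verified Lean document; each statement's English description precedes it below -/
import Mathlib

section
/- Let n ≥ 1, let 1 < p₀ < ∞ and β ≥ 0, and let T be an operator (not necessarily linear) mapping measurable functions on ℝ^n to measurable functions. Assume there is a constant c > 0 such that for every weight w ∈ A_{p₀} and every f with ‖f‖_{L^{p₀}(w)} < ∞ one has ‖Tf‖_{L^{p₀}(w)} ≤ c [w]_{A_{p₀}}^β ‖f‖_{L^{p₀}(w)}. Then there is a constant c' > 0, depending only on c, β, p₀ and n, such that for every p with 1 < p < p₀, ‖T‖_{L^p(ℝ^n)} ≤ c' ‖M‖_{L^p(ℝ^n)}^{β(p₀−p)}. -/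
open MeasureTheory Filter
open scoped ENNReal NNReal

/-- A (closed) cube in ℝⁿ with sides parallel to the coordinate axes. -/
def IsCube (n : ℕ) (Q : Set (Fin n → ℝ)) : Prop :=
  ∃ (a : Fin n → ℝ) (h : ℝ), 0 < h ∧ Q = {y | ∀ i, y i ∈ Set.Icc (a i) (a i + h)}

/-- Average of an `ℝ≥0∞`-valued function over a set. -/
noncomputable def setAvg (n : ℕ) (Q : Set (Fin n → ℝ)) (g : (Fin n → ℝ) → ℝ≥0∞) : ℝ≥0∞ :=
  (volume Q)⁻¹ * ∫⁻ y in Q, g y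

/-- The Muckenhoupt `A_p` constant of a weight `w`. -/
noncomputable def ApConst (n : ℕ) (p : ℝ) (w : (Fin n → ℝ) → ℝ≥0∞) : ℝ≥0∞ :=
  ⨆ (Q : Set (Fin n → ℝ)) (_ : IsCube n Q),
    setAvg n Q w * (setAvg n Q fun y => w y ^ (1 - p / (p - 1))) ^ (p - 1)

/-- A weight: a measurable nonnegative (`ℝ≥0∞`-valued) locally integrable function. -/
def IsWeight (n : ℕ) (w : (Fin n → ℝ) → ℝ≥0∞) : Prop :=
  Measurable w ∧ ∀ Q : Set (Fin n → ℝ), IsCube n Q → (∫⁻ y in Q, w y) < ∞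

/-- Weighted L^p norm of an `ℝ≥0∞`-valued function. -/
noncomputable def wLpNormE (n : ℕ) (p : ℝ) (w : (Fin n → ℝ) → ℝ≥0∞)
    (g : (Fin n → ℝ) → ℝ≥0∞) : ℝ≥0∞ :=
  (∫⁻ x, g x ^ p * w x) ^ (1 / p)

/-- Weighted L^p norm of a real function. -/
noncomputable def wLpNorm (n : ℕ) (p : ℝ) (w : (Fin n → ℝ) → ℝ≥0∞)
    (f : (Fin n → ℝ) → ℝ) : ℝ≥0∞ :=
  wLpNormE n p w fun x => (‖f x‖₊ : ℝ≥0∞)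

/-- Unweighted L^p norm of a real function on ℝⁿ. -/
noncomputable def lpNorm (n : ℕ) (p : ℝ) (f : (Fin n → ℝ) → ℝ) : ℝ≥0∞ :=
  (∫⁻ x, (‖f x‖₊ : ℝ≥0∞) ^ p) ^ (1 / p)

/-- Unweighted L^p norm of an `ℝ≥0∞`-valued function on ℝⁿ. -/
noncomputable def lpNormE (n : ℕ) (p : ℝ) (g : (Fin n → ℝ) → ℝ≥0∞) : ℝ≥0∞ :=
  (∫⁻ x, g x ^ p) ^ (1 / p)

/-- Operator norm on unweighted `L^p(ℝⁿ)`: the least `C ∈ [0,∞]` with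
`‖Tf‖_p ≤ C ‖f‖_p` for all `f ∈ L^p`. -/
noncomputable def opNorm (n : ℕ) (p : ℝ)
    (T : ((Fin n → ℝ) → ℝ) → (Fin n → ℝ) → ℝ) : ℝ≥0∞ :=
  sInf {C : ℝ≥0∞ | ∀ f : (Fin n → ℝ) → ℝ, Measurable f → lpNorm n p f < ∞ →
    lpNorm n p (T f) ≤ C * lpNorm n p f}

/-- The Hardy–Littlewood maximal operator (over cubes with sides parallel to the axes). -/
noncomputable def HLM (n : ℕ) (g : (Fin n → ℝ) → ℝ≥0∞) : (Fin n → ℝ) → ℝ≥0∞ :=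
  fun x => ⨆ (Q : Set (Fin n → ℝ)) (_ : IsCube n Q) (_ : x ∈ Q), setAvg n Q g

/-- The operator norm of the Hardy–Littlewood maximal operator on `L^p(ℝⁿ)`. -/
noncomputable def maximalOpNorm (n : ℕ) (p : ℝ) : ℝ≥0∞ :=
  sInf {C : ℝ≥0∞ | ∀ f : (Fin n → ℝ) → ℝ, Measurable f → lpNorm n p f < ∞ →
    lpNormE n p (HLM n fun y => (‖f y‖₊ : ℝ≥0∞)) ≤ C * lpNorm n p f}

open Metric

namespace S2

variable {n : ℕ}

lemma closedBall_eq_cube (z : Fin n → ℝ) {r : ℝ} (hr : 0 ≤ r) :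
    closedBall z r = {y : Fin n → ℝ | ∀ i, y i ∈ Set.Icc (z i - r) (z i + r)} := by
  ext y
  simp only [mem_closedBall, dist_pi_le_iff hr, Real.dist_eq, Set.mem_setOf_eq, Set.mem_Icc,
    abs_sub_le_iff]
  constructor
  · intro h i; have := h i; constructor <;> linarith [this.1, this.2]
  · intro h i; have := h i; constructor <;> linarith [this.1, this.2]

lemma isCube_closedBall (z : Fin n → ℝ) {r : ℝ} (hr : 0 < r) :
    IsCube n (closedBall z r) := by
  refine ⟨fun i => z i - r, 2 * r, by linarith, ?_⟩
  rw [closedBall_eq_cube z hr.le]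
  ext y
  simp only [Set.mem_setOf_eq, Set.mem_Icc]
  constructor
  · intro h i; have := h i; constructor <;> linarith [this.1, this.2]
  · intro h i; have := h i; constructor <;> linarith [this.1, this.2]

lemma cube_eq_closedBall {Q : Set (Fin n → ℝ)} (hQ : IsCube n Q) :
    ∃ (z : Fin n → ℝ) (r : ℝ), 0 < r ∧ Q = closedBall z r := by
  obtain ⟨a, h, hh, rfl⟩ := hQ
  refine ⟨fun i => a i + h / 2, h / 2, by linarith, ?_⟩
  rw [closedBall_eq_cube _ (by linarith : (0:ℝ) ≤ h / 2)]
  ext y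
  simp only [Set.mem_setOf_eq, Set.mem_Icc]
  constructor
  · intro hy i; have := hy i; constructor <;> linarith [this.1, this.2]
  · intro hy i; have := hy i; constructor <;> linarith [this.1, this.2]

lemma volume_closedBall_pi (z : Fin n → ℝ) {r : ℝ} (hr : 0 ≤ r) :
    volume (closedBall z r) = ENNReal.ofReal (2 * r) ^ n := by
  rw [closedBall_eq_cube z hr]
  have : {y : Fin n → ℝ | ∀ i, y i ∈ Set.Icc (z i - r) (z i + r)} =
      Set.univ.pi fun i => Set.Icc (z i - r) (z i + r) := by
    ext y; simp only [Set.mem_setOf_eq, Set.mem_univ_pi]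
  rw [this, volume_pi_pi]
  simp only [Real.volume_Icc]
  have h2 : ∀ x : Fin n, z x + r - (z x - r) = 2 * r := fun x => by ring
  simp only [h2]
  rw [Finset.prod_const, Finset.card_univ, Fintype.card_fin]

lemma cube_volume_pos {Q : Set (Fin n → ℝ)} (hQ : IsCube n Q) : 0 < volume Q := by
  obtain ⟨z, r, hr, rfl⟩ := cube_eq_closedBall hQ
  rw [volume_closedBall_pi z hr.le]
  exact ENNReal.pow_pos (ENNReal.ofReal_pos.2 (by linarith)) n

lemma cube_volume_ne_top {Q : Set (Fin n → ℝ)} (hQ : IsCube n Q) : volume Q ≠ ∞ := by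
  obtain ⟨z, r, hr, rfl⟩ := cube_eq_closedBall hQ
  rw [volume_closedBall_pi z hr.le]
  exact (ENNReal.pow_lt_top ENNReal.ofReal_lt_top).ne

lemma cube_measurableSet {Q : Set (Fin n → ℝ)} (hQ : IsCube n Q) : MeasurableSet Q := by
  obtain ⟨z, r, hr, rfl⟩ := cube_eq_closedBall hQ
  exact measurableSet_closedBall

lemma setAvg_le_HLM {g : (Fin n → ℝ) → ℝ≥0∞} {Q : Set (Fin n → ℝ)} (hQ : IsCube n Q)
    {x : Fin n → ℝ} (hx : x ∈ Q) : setAvg n Q g ≤ HLM n g x :=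
  le_iSup_of_le Q (le_iSup_of_le hQ (le_iSup_of_le hx le_rfl))

lemma HLM_le {g : (Fin n → ℝ) → ℝ≥0∞} {x : Fin n → ℝ} {A : ℝ≥0∞}
    (h : ∀ Q : Set (Fin n → ℝ), IsCube n Q → x ∈ Q → setAvg n Q g ≤ A) : HLM n g x ≤ A :=
  iSup_le fun Q => iSup_le fun hQ => iSup_le fun hx => h Q hQ hx

lemma lt_HLM_iff {g : (Fin n → ℝ) → ℝ≥0∞} {x : Fin n → ℝ} {A : ℝ≥0∞} :
    A < HLM n g x ↔ ∃ Q : Set (Fin n → ℝ), IsCube n Q ∧ x ∈ Q ∧ A < setAvg n Q g := by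
  simp only [HLM, lt_iSup_iff]
  tauto

lemma setAvg_mono {g g' : (Fin n → ℝ) → ℝ≥0∞} (h : ∀ y, g y ≤ g' y) (Q : Set (Fin n → ℝ)) :
    setAvg n Q g ≤ setAvg n Q g' :=
  mul_le_mul_right (lintegral_mono fun y => h y) _

lemma setAvg_congr_ae {g g' : (Fin n → ℝ) → ℝ≥0∞} (h : g =ᵐ[volume] g')
    (Q : Set (Fin n → ℝ)) : setAvg n Q g = setAvg n Q g' := by
  unfold setAvg
  congr 1
  exact lintegral_congr_ae (ae_restrict_of_ae h)

lemma HLM_congr_ae {g g' : (Fin n → ℝ) → ℝ≥0∞} (h : g =ᵐ[volume] g') :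
    HLM n g = HLM n g' := by
  funext x
  unfold HLM
  congr 1; funext Q
  rw [setAvg_congr_ae h Q]

lemma HLM_mono {g g' : (Fin n → ℝ) → ℝ≥0∞} (h : ∀ y, g y ≤ g' y) (x : Fin n → ℝ) :
    HLM n g x ≤ HLM n g' x :=
  HLM_le fun Q hQ hx => (setAvg_mono h Q).trans (setAvg_le_HLM hQ hx)

lemma lowerSemicontinuous_HLM (g : (Fin n → ℝ) → ℝ≥0∞) :
    LowerSemicontinuous (HLM n g) := by
  intro x A hA
  obtain ⟨Q, hQ, hx, hAQ⟩ := lt_HLM_iff.1 hA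
  obtain ⟨z, r, hr, rfl⟩ := cube_eq_closedBall hQ
  set I : ℝ≥0∞ := ∫⁻ y in closedBall z r, g y with hI
  -- key: for y with dist y x ≤ δ, HLM g y ≥ (vol ball (r+δ))⁻¹ * I
  have key : ∀ δ : ℝ, 0 < δ → ∀ y : Fin n → ℝ, dist y x < δ →
      (ENNReal.ofReal (2 * (r + δ)) ^ n)⁻¹ * I ≤ HLM n g y := by
    intro δ hδ y hy
    have hsub : closedBall z r ⊆ closedBall z (r + δ) := closedBall_subset_closedBall (by linarith)
    have hmem : y ∈ closedBall z (r + δ) := by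
      have : dist y z ≤ dist y x + dist x z := dist_triangle y x z
      have hxz : dist x z ≤ r := mem_closedBall.1 hx
      exact mem_closedBall.2 (by linarith)
    refine le_trans ?_ (setAvg_le_HLM (isCube_closedBall z (by linarith : 0 < r + δ)) hmem)
    unfold setAvg
    rw [volume_closedBall_pi z (by linarith : (0:ℝ) ≤ r + δ)]
    exact mul_le_mul_right (lintegral_mono_set hsub) _
  have hAI : A < (ENNReal.ofReal (2 * r) ^ n)⁻¹ * I := by
    have : setAvg n (closedBall z r) g = (ENNReal.ofReal (2 * r) ^ n)⁻¹ * I := by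
      unfold setAvg; rw [volume_closedBall_pi z hr.le]
    rwa [this] at hAQ
  -- find δ > 0 with A < (vol (r+δ))⁻¹ * I
  rcases eq_or_ne I ∞ with hItop | hItop
  · -- any δ works, e.g. δ = 1
    filter_upwards [Metric.ball_mem_nhds x one_pos] with y hy
    refine lt_of_lt_of_le ?_ (key 1 one_pos y (mem_ball.1 hy))
    rw [hItop, ENNReal.mul_top]
    · exact hA.trans_le le_top
    · simp only [ne_eq, ENNReal.inv_eq_zero]
      exact (ENNReal.pow_lt_top ENNReal.ofReal_lt_top).ne
  · have hcont : Tendsto (fun δ : ℝ => (ENNReal.ofReal (2 * (r + δ)) ^ n)⁻¹ * I)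
        (nhds 0) (nhds ((ENNReal.ofReal (2 * r) ^ n)⁻¹ * I)) := by
      have h1 : Tendsto (fun δ : ℝ => 2 * (r + δ)) (nhds 0) (nhds (2 * r)) := by
        have : Continuous fun δ : ℝ => 2 * (r + δ) := by continuity
        simpa using this.tendsto 0
      have h2 : Tendsto (fun δ : ℝ => (ENNReal.ofReal (2 * (r + δ)) ^ n)⁻¹) (nhds 0)
          (nhds ((ENNReal.ofReal (2 * r) ^ n)⁻¹)) := by
        exact ENNReal.tendsto_inv_iff.2
          (((ENNReal.continuous_pow n).tendsto _).comp
            ((ENNReal.continuous_ofReal.tendsto _).comp h1))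
      exact ENNReal.Tendsto.mul_const h2 (Or.inr hItop)
    have hev : ∀ᶠ δ : ℝ in nhds 0, A < (ENNReal.ofReal (2 * (r + δ)) ^ n)⁻¹ * I :=
      hcont.eventually (eventually_gt_nhds hAI)
    obtain ⟨δ, hδpos, hδ⟩ : ∃ δ : ℝ, 0 < δ ∧ A < (ENNReal.ofReal (2 * (r + δ)) ^ n)⁻¹ * I := by
      obtain ⟨ε, hε, hball⟩ := Metric.eventually_nhds_iff.1 hev
      refine ⟨ε / 2, by linarith, hball ?_⟩
      rw [Real.dist_eq, sub_zero, abs_of_pos (by linarith : (0:ℝ) < ε / 2)]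
      linarith
    filter_upwards [Metric.ball_mem_nhds x hδpos] with y hy
    exact hδ.trans_le (key δ hδpos y (mem_ball.1 hy))

end S2


namespace S2

variable {n : ℕ}

lemma two_ne_zero' : (2:ℝ≥0∞) ≠ 0 := by norm_num
lemma two_ne_top' : (2:ℝ≥0∞) ≠ ∞ := by norm_num

@[fun_prop]
lemma measurable_HLM (g : (Fin n → ℝ) → ℝ≥0∞) : Measurable (HLM n g) :=
  (lowerSemicontinuous_HLM g).measurable

lemma setAvg_add_const {Q : Set (Fin n → ℝ)} (hQ : IsCube n Q) {g : (Fin n → ℝ) → ℝ≥0∞}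
    (hg : Measurable g) (c : ℝ≥0∞) :
    setAvg n Q (fun y => g y + c) = setAvg n Q g + c := by
  unfold setAvg
  rw [lintegral_add_right _ measurable_const, setLIntegral_const, mul_add, mul_comm c (volume Q),
    ← mul_assoc, ENNReal.inv_mul_cancel (cube_volume_pos hQ).ne' (cube_volume_ne_top hQ), one_mul]

/-- Weak (1,1) bound for the maximal operator, via the Vitali covering lemma. -/
lemma weak_type (hn : 1 ≤ n) {g : (Fin n → ℝ) → ℝ≥0∞} (hg : Measurable g)
    {lam : ℝ≥0∞} (h0 : lam ≠ 0) (htop : lam ≠ ∞) (hint : ∫⁻ y, g y < ∞) :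
    volume {x | lam < HLM n g x} ≤ 4 ^ n * lam⁻¹ * ∫⁻ y, g y := by
  classical
  set Itot : ℝ≥0∞ := ∫⁻ y, g y with hItot
  set t : Set ((Fin n → ℝ) × ℝ) :=
    {q | 0 < q.2 ∧ lam < setAvg n (Metric.closedBall q.1 q.2) g} with ht
  -- basic estimate on elements of t
  have hvol : ∀ q ∈ t, lam * volume (Metric.closedBall q.1 q.2) ≤
      ∫⁻ y in Metric.closedBall q.1 q.2, g y := by
    rintro q ⟨hr, hq⟩
    have hV0 : volume (Metric.closedBall q.1 q.2) ≠ 0 :=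
      (cube_volume_pos (isCube_closedBall q.1 hr)).ne'
    have hVt : volume (Metric.closedBall q.1 q.2) ≠ ∞ :=
      cube_volume_ne_top (isCube_closedBall q.1 hr)
    have := mul_le_mul_left hq.le (volume (Metric.closedBall q.1 q.2))
    calc lam * volume (Metric.closedBall q.1 q.2) ≤
        setAvg n (Metric.closedBall q.1 q.2) g * volume (Metric.closedBall q.1 q.2) := this
      _ = ∫⁻ y in Metric.closedBall q.1 q.2, g y := by
          unfold setAvg
          rw [mul_comm (volume (Metric.closedBall q.1 q.2))⁻¹ _, mul_assoc,
            ENNReal.inv_mul_cancel hV0 hVt, mul_one]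
  have hvol' : ∀ q ∈ t, volume (Metric.closedBall q.1 q.2) ≤
      lam⁻¹ * ∫⁻ y in Metric.closedBall q.1 q.2, g y := by
    intro q hq
    have h1 := mul_le_mul_right (hvol q hq) lam⁻¹
    rwa [← mul_assoc, ENNReal.inv_mul_cancel h0 htop, one_mul] at h1
  -- radius bound
  set R : ℝ := max 1 ((lam⁻¹ * Itot).toReal) with hR
  have hrad : ∀ q ∈ t, q.2 ≤ R := by
    intro q hq
    have h1 : volume (Metric.closedBall q.1 q.2) ≤ lam⁻¹ * Itot := by
      refine (hvol' q hq).trans (mul_le_mul_right ?_ _)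
      exact setLIntegral_le_lintegral _ _
    rw [volume_closedBall_pi _ (le_of_lt hq.1)] at h1
    have hfin : lam⁻¹ * Itot ≠ ∞ :=
      ENNReal.mul_ne_top (ENNReal.inv_ne_top.2 h0) hint.ne
    have h2 : (2 * q.2) ^ n ≤ (lam⁻¹ * Itot).toReal := by
      rw [← ENNReal.ofReal_le_iff_le_toReal hfin, ENNReal.ofReal_pow (by linarith [hq.1])]
      exact h1
    have h3 : 2 * q.2 ≤ max 1 ((lam⁻¹ * Itot).toReal) := by
      rcases le_or_gt (2 * q.2) 1 with h | h
      · exact h.trans (le_max_left _ _)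
      · refine le_trans ?_ (le_max_right _ _)
        calc 2 * q.2 ≤ (2 * q.2) ^ n := le_self_pow₀ h.le (by omega)
          _ ≤ _ := h2
    have := hq.1
    rw [hR]; linarith [le_trans (by linarith : q.2 ≤ 2 * q.2) h3]
  -- Vitali
  obtain ⟨u, hut, hdisj, hcov⟩ :=
    Vitali.exists_disjoint_subfamily_covering_enlargement_closedBall t Prod.fst Prod.snd R hrad 4
      (by norm_num)
  -- u is countable
  have hucnt : u.Countable := by
    have hmeas : ∀ i : u, MeasurableSet (Metric.closedBall (i : (Fin n → ℝ) × ℝ).1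
        (i : (Fin n → ℝ) × ℝ).2) := fun i => measurableSet_closedBall
    have hpw : Pairwise (Function.onFun Disjoint fun i : u =>
        Metric.closedBall (i : (Fin n → ℝ) × ℝ).1 (i : (Fin n → ℝ) × ℝ).2) := by
      intro i j hij
      exact hdisj i.2 j.2 (fun h => hij (Subtype.ext h))
    have hcnt := MeasureTheory.Measure.countable_meas_pos_of_disjoint_iUnion
      (μ := (volume : Measure (Fin n → ℝ))) hmeas hpw
    have : {i : u | 0 < volume (Metric.closedBall (i : (Fin n → ℝ) × ℝ).1
        (i : (Fin n → ℝ) × ℝ).2)} = Set.univ := by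
      ext i
      simp only [Set.mem_setOf_eq, Set.mem_univ, iff_true]
      exact cube_volume_pos (isCube_closedBall _ (hut i.2).1)
    rw [this] at hcnt
    have : Countable u := Set.countable_univ_iff.1 hcnt
    exact Set.countable_coe_iff.1 this
  -- covering
  have hcover : {x | lam < HLM n g x} ⊆ ⋃ q ∈ u, Metric.closedBall q.1 (4 * q.2) := by
    intro x hx
    obtain ⟨Q, hQ, hxQ, hlt⟩ := lt_HLM_iff.1 hx
    obtain ⟨z, r, hr, rfl⟩ := cube_eq_closedBall hQ
    have hqt : ((z, r) : (Fin n → ℝ) × ℝ) ∈ t := ⟨hr, hlt⟩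
    obtain ⟨q, hqu, hsub⟩ := hcov _ hqt
    exact Set.mem_biUnion hqu (hsub hxQ)
  -- conclusion
  calc volume {x | lam < HLM n g x} ≤ volume (⋃ q ∈ u, Metric.closedBall q.1 (4 * q.2)) :=
        measure_mono hcover
    _ ≤ ∑' q : u, volume (Metric.closedBall (q : (Fin n → ℝ) × ℝ).1
          (4 * (q : (Fin n → ℝ) × ℝ).2)) := measure_biUnion_le _ hucnt _
    _ ≤ ∑' q : u, 4 ^ n * (lam⁻¹ * ∫⁻ y in Metric.closedBall (q : (Fin n → ℝ) × ℝ).1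
          (q : (Fin n → ℝ) × ℝ).2, g y) := by
        refine ENNReal.tsum_le_tsum fun q => ?_
        have hr : 0 < (q : (Fin n → ℝ) × ℝ).2 := (hut q.2).1
        have : volume (Metric.closedBall (q : (Fin n → ℝ) × ℝ).1 (4 * (q : (Fin n → ℝ) × ℝ).2))
            = 4 ^ n * volume (Metric.closedBall (q : (Fin n → ℝ) × ℝ).1
              (q : (Fin n → ℝ) × ℝ).2) := by
          rw [volume_closedBall_pi _ (by linarith), volume_closedBall_pi _ hr.le]
          rw [show 2 * (4 * (q : (Fin n → ℝ) × ℝ).2) = 4 * (2 * (q : (Fin n → ℝ) × ℝ).2) by ring,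
            ENNReal.ofReal_mul (by norm_num), ← mul_pow]
          norm_num
        rw [this]
        exact mul_le_mul_right (hvol' _ (hut q.2)) _
    _ = 4 ^ n * lam⁻¹ * ∑' q : u, ∫⁻ y in Metric.closedBall (q : (Fin n → ℝ) × ℝ).1
          (q : (Fin n → ℝ) × ℝ).2, g y := by
        simp only [ENNReal.tsum_mul_left, mul_assoc]
    _ ≤ 4 ^ n * lam⁻¹ * Itot := by
        refine mul_le_mul_right ?_ _
        have := lintegral_biUnion hucnt (fun q _ => measurableSet_closedBall) hdisj g
          (μ := (volume : Measure (Fin n → ℝ)))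
        rw [← this]
        exact setLIntegral_le_lintegral _ _

lemma half_ne_zero' {lam : ℝ≥0∞} (h0 : lam ≠ 0) : lam / 2 ≠ 0 := by
  rw [div_eq_mul_inv]
  exact mul_ne_zero h0 (ENNReal.inv_ne_zero.2 two_ne_top')

lemma half_ne_top' {lam : ℝ≥0∞} (htop : lam ≠ ∞) : lam / 2 ≠ ∞ := by
  rw [div_eq_mul_inv]
  exact ENNReal.mul_ne_top htop (ENNReal.inv_ne_top.2 two_ne_zero')

/-- Weak bound with truncation: only the part of `g` above `lam/2` matters. -/
lemma split_weak (hn : 1 ≤ n) {g : (Fin n → ℝ) → ℝ≥0∞} (hg : Measurable g)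
    {lam : ℝ≥0∞} (h0 : lam ≠ 0) (htop : lam ≠ ∞)
    (hfin : ∫⁻ y in {y | lam / 2 < g y}, g y < ∞) :
    volume {x | lam < HLM n g x} ≤ 4 ^ n * (lam / 2)⁻¹ * ∫⁻ y in {y | lam / 2 < g y}, g y := by
  classical
  set S : Set (Fin n → ℝ) := {y | lam / 2 < g y} with hS
  have hSm : MeasurableSet S := hg measurableSet_Ioi
  set g1 : (Fin n → ℝ) → ℝ≥0∞ := S.indicator g with hg1def
  have hg1 : Measurable g1 := hg.indicator hSm
  have hpt : ∀ y, g y ≤ g1 y + lam / 2 := by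
    intro y
    by_cases hy : y ∈ S
    · rw [hg1def, Set.indicator_of_mem hy]; exact le_self_add
    · rw [hg1def, Set.indicator_of_notMem hy, zero_add]
      exact le_of_not_gt hy
  have hM : ∀ x, HLM n g x ≤ HLM n g1 x + lam / 2 := by
    intro x
    refine HLM_le fun Q hQ hx => ?_
    calc setAvg n Q g ≤ setAvg n Q (fun y => g1 y + lam / 2) := setAvg_mono hpt Q
      _ = setAvg n Q g1 + lam / 2 := setAvg_add_const hQ hg1 _
      _ ≤ HLM n g1 x + lam / 2 := add_le_add_left (setAvg_le_HLM hQ hx) _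
  have hsub : {x | lam < HLM n g x} ⊆ {x | lam / 2 < HLM n g1 x} := by
    intro x hx
    by_contra h
    have h' : HLM n g1 x ≤ lam / 2 := le_of_not_gt h
    have : lam < lam := by
      calc lam < HLM n g x := hx
        _ ≤ HLM n g1 x + lam / 2 := hM x
        _ ≤ lam / 2 + lam / 2 := add_le_add_left h' _
        _ = lam := ENNReal.add_halves lam
    exact lt_irrefl _ this
  have hint : ∫⁻ y, g1 y < ∞ := by
    rw [hg1def, lintegral_indicator hSm]
    exact hfin
  calc volume {x | lam < HLM n g x} ≤ volume {x | lam / 2 < HLM n g1 x} := measure_mono hsub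
    _ ≤ 4 ^ n * (lam / 2)⁻¹ * ∫⁻ y, g1 y :=
        weak_type hn hg1 (half_ne_zero' h0) (half_ne_top' htop) hint
    _ = 4 ^ n * (lam / 2)⁻¹ * ∫⁻ y in S, g y := by rw [hg1def, lintegral_indicator hSm]

/-- Truncated mass bound: `∫_{g > c} g ≤ c^(1-p) ∫ g^p`. -/
lemma lintegral_above {p : ℝ} (hp : 1 < p) {g : (Fin n → ℝ) → ℝ≥0∞} (hg : Measurable g)
    {c : ℝ≥0∞} (hc0 : c ≠ 0) (hct : c ≠ ∞) :
    ∫⁻ y in {y | c < g y}, g y ≤ c ^ (1 - p) * ∫⁻ y, g y ^ p := by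
  have hSm : MeasurableSet {y | c < g y} := hg measurableSet_Ioi
  have hmono : ∀ y ∈ {y | c < g y}, g y ≤ c ^ (1 - p) * g y ^ p := by
    intro y hy
    have hy' : c < g y := hy
    rcases eq_or_ne (g y) ∞ with htop | htop
    · have hne : c ^ (1 - p) ≠ 0 := by
        rw [ne_eq, ENNReal.rpow_eq_zero_iff]
        push_neg
        exact ⟨fun h => absurd h hc0, fun h => absurd h hct⟩
      have heq : c ^ (1 - p) * g y ^ p = ⊤ := by
        rw [htop, ENNReal.top_rpow_of_pos (by linarith : (0:ℝ) < p), ENNReal.mul_top hne]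
      rw [heq]
      exact le_top
    · have hg0 : g y ≠ 0 := by
        intro h
        rw [h] at hy'
        exact (not_lt_bot hy')
      have h1 : g y = g y ^ p * g y ^ (1 - p) := by
        rw [← ENNReal.rpow_add _ _ hg0 htop]
        norm_num
      have hle : g y ^ (1 - p) ≤ c ^ (1 - p) := by
        rw [show (1:ℝ) - p = -(p - 1) by ring, ENNReal.rpow_neg, ENNReal.rpow_neg]
        exact ENNReal.inv_le_inv' (ENNReal.rpow_le_rpow (le_of_lt hy') (by linarith))
      calc g y = g y ^ p * g y ^ (1 - p) := h1
        _ = g y ^ (1 - p) * g y ^ p := mul_comm _ _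
        _ ≤ c ^ (1 - p) * g y ^ p := mul_le_mul_left hle _
  calc ∫⁻ y in {y | c < g y}, g y ≤ ∫⁻ y in {y | c < g y}, c ^ (1 - p) * g y ^ p := by
        refine setLIntegral_mono (by fun_prop) hmono
    _ = c ^ (1 - p) * ∫⁻ y in {y | c < g y}, g y ^ p := by
        rw [lintegral_const_mul _ (by fun_prop)]
    _ ≤ c ^ (1 - p) * ∫⁻ y, g y ^ p := mul_le_mul_right (setLIntegral_le_lintegral _ _) _

end S2

namespace S2

variable {n : ℕ}

lemma rpow_ne_top' {x : ℝ≥0∞} (hx : x ≠ 0) (h'x : x ≠ ∞) (y : ℝ) : x ^ y ≠ ∞ := by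
  rw [ne_eq, ENNReal.rpow_eq_top_iff]
  push_neg
  exact ⟨fun h => absurd h hx, fun h => absurd h h'x⟩

lemma geom_denom_pos {p : ℝ} (hp : 1 < p) : (2:ℝ≥0∞) ^ (1 - p) < 1 :=
  ENNReal.rpow_lt_one_of_one_lt_of_neg (by norm_num) (by linarith)

lemma geom_denom_inv_ne_top {p : ℝ} (hp : 1 < p) : ((1:ℝ≥0∞) - (2:ℝ≥0∞) ^ (1 - p))⁻¹ ≠ ∞ := by
  rw [ENNReal.inv_ne_top]
  exact (tsub_pos_iff_lt.2 (geom_denom_pos hp)).ne'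

lemma geom_denom_inv_ne_zero {p : ℝ} (hp : 1 < p) : ((1:ℝ≥0∞) - (2:ℝ≥0∞) ^ (1 - p))⁻¹ ≠ 0 := by
  rw [ENNReal.inv_ne_zero]
  exact (lt_of_le_of_lt tsub_le_self (by norm_num : (1:ℝ≥0∞) < ∞)).ne

/-- The key geometric-series estimate. -/
lemma geom_sum_bound {p : ℝ} (hp : 1 < p) (v : ℝ≥0∞) :
    ∑' j : ℤ, (2:ℝ≥0∞) ^ (((j:ℝ) + 1) * p) * (2:ℝ≥0∞) ^ (2 - (j:ℝ)) *
      (if (2:ℝ≥0∞) ^ ((j:ℝ) - 2) < v then v else 0) ≤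
    (2:ℝ≥0∞) ^ (3 * p) * ((1:ℝ≥0∞) - (2:ℝ≥0∞) ^ (1 - p))⁻¹ * v ^ p := by
  rcases eq_or_ne v 0 with rfl | hv0
  · simp only [ite_self, mul_zero, tsum_zero]
    exact zero_le
  rcases eq_or_ne v ∞ with rfl | hvt
  · have hRT : (2:ℝ≥0∞) ^ (3 * p) * ((1:ℝ≥0∞) - (2:ℝ≥0∞) ^ (1 - p))⁻¹ * (⊤:ℝ≥0∞) ^ p = ⊤ := by
      rw [ENNReal.top_rpow_of_pos (by linarith : (0:ℝ) < p), ENNReal.mul_top]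
      exact mul_ne_zero (by
        rw [ne_eq, ENNReal.rpow_eq_zero_iff]; push_neg
        exact ⟨fun h => absurd h two_ne_zero', fun h => absurd h two_ne_top'⟩)
        (geom_denom_inv_ne_zero hp)
    rw [hRT]
    exact le_top
  obtain ⟨J, hJ1, hJ2⟩ := ENNReal.exists_mem_Ico_zpow hv0 hvt (by norm_num : (1:ℝ≥0∞) < 2)
    two_ne_top'
  have hJ1' : (2:ℝ≥0∞) ^ ((J:ℝ)) ≤ v := by
    rw [show ((J:ℝ)) = ((J:ℤ):ℝ) by norm_num, ENNReal.rpow_intCast]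
    exact hJ1
  have hJ2' : v < (2:ℝ≥0∞) ^ ((J:ℝ) + 1) := by
    rw [show (J:ℝ) + 1 = ((J + 1 : ℤ):ℝ) by push_cast; ring, ENNReal.rpow_intCast]
    exact hJ2
  set K : ℤ := J + 2 with hK
  set f : ℤ → ℝ≥0∞ := fun j => if j ≤ K then (2:ℝ≥0∞) ^ ((j:ℝ) * (p - 1)) else 0 with hf
  -- termwise bound
  have step1 : ∀ j : ℤ, (2:ℝ≥0∞) ^ (((j:ℝ) + 1) * p) * (2:ℝ≥0∞) ^ (2 - (j:ℝ)) *
      (if (2:ℝ≥0∞) ^ ((j:ℝ) - 2) < v then v else 0) ≤ (2:ℝ≥0∞) ^ (p + 2) * v * f j := by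
    intro j
    by_cases hcond : (2:ℝ≥0∞) ^ ((j:ℝ) - 2) < v
    · rw [if_pos hcond]
      have hjK : j ≤ K := by
        have h1 : (2:ℝ≥0∞) ^ ((j:ℝ) - 2) < (2:ℝ≥0∞) ^ ((J:ℝ) + 1) := hcond.trans hJ2'
        have h2 : (j:ℝ) - 2 < (J:ℝ) + 1 := by
          by_contra hge
          push_neg at hge
          exact absurd (ENNReal.rpow_le_rpow_of_exponent_le (by norm_num) hge) (not_le.2 h1)
        have : (j:ℝ) < (J:ℝ) + 3 := by linarith
        have : j < J + 3 := by exact_mod_cast this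
        omega
      rw [hf]
      simp only [if_pos hjK]
      have he : (2:ℝ≥0∞) ^ (((j:ℝ) + 1) * p) * (2:ℝ≥0∞) ^ (2 - (j:ℝ)) =
          (2:ℝ≥0∞) ^ ((j:ℝ) * (p - 1)) * (2:ℝ≥0∞) ^ (p + 2) := by
        rw [← ENNReal.rpow_add _ _ two_ne_zero' two_ne_top',
          ← ENNReal.rpow_add _ _ two_ne_zero' two_ne_top']
        congr 1; ring
      rw [he]
      exact le_of_eq (by ring)
    · rw [if_neg hcond, mul_zero]
      exact zero_le
  -- the sum of f
  have step2 : ∑' j : ℤ, f j =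
      (2:ℝ≥0∞) ^ ((K:ℝ) * (p - 1)) * ((1:ℝ≥0∞) - (2:ℝ≥0∞) ^ (1 - p))⁻¹ := by
    have hinj : Function.Injective fun k : ℕ => K - (k:ℤ) := by
      intro a b hab
      simp only at hab
      omega
    have hsupp : Function.support f ⊆ Set.range fun k : ℕ => K - (k:ℤ) := by
      intro j hj
      have hjK : j ≤ K := by
        by_contra h
        exact hj (by simp only [hf, if_neg h])
      refine ⟨(K - j).toNat, ?_⟩
      simp only
      omega
    rw [← Function.Injective.tsum_eq hinj hsupp]
    have heach : ∀ k : ℕ, f (K - (k:ℤ)) =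
        (2:ℝ≥0∞) ^ ((K:ℝ) * (p - 1)) * ((2:ℝ≥0∞) ^ (1 - p)) ^ k := by
      intro k
      rw [hf]
      simp only [if_pos (by omega : K - (k:ℤ) ≤ K)]
      have hc : ((K - (k:ℤ) : ℤ):ℝ) = (K:ℝ) - (k:ℝ) := by push_cast; ring
      have hk : (2:ℝ≥0∞) ^ ((1 - p) * (k:ℝ)) = ((2:ℝ≥0∞) ^ (1 - p)) ^ k := by
        rw [ENNReal.rpow_mul, ENNReal.rpow_natCast]
      rw [hc, show ((K:ℝ) - (k:ℝ)) * (p - 1) = (K:ℝ) * (p - 1) + (1 - p) * (k:ℝ) by ring,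
        ENNReal.rpow_add _ _ two_ne_zero' two_ne_top', hk]
    simp only [heach]
    rw [ENNReal.tsum_mul_left, ENNReal.tsum_geometric]
  -- assemble
  have hvmul : v * v ^ (p - 1) = v ^ p := by
    have : v ^ p = v ^ (1 + (p - 1)) := by norm_num
    rw [this, ENNReal.rpow_add _ _ hv0 hvt, ENNReal.rpow_one]
  have hK2 : (2:ℝ≥0∞) ^ ((K:ℝ) * (p - 1)) ≤ (2:ℝ≥0∞) ^ (2 * (p - 1)) * v ^ (p - 1) := by
    have hKc : (K:ℝ) = (J:ℝ) + 2 := by rw [hK]; push_cast; ring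
    rw [hKc, show ((J:ℝ) + 2) * (p - 1) = 2 * (p - 1) + (J:ℝ) * (p - 1) by ring,
      ENNReal.rpow_add _ _ two_ne_zero' two_ne_top']
    refine mul_le_mul_right ?_ _
    rw [ENNReal.rpow_mul]
    exact ENNReal.rpow_le_rpow hJ1' (by linarith)
  calc ∑' j : ℤ, (2:ℝ≥0∞) ^ (((j:ℝ) + 1) * p) * (2:ℝ≥0∞) ^ (2 - (j:ℝ)) *
        (if (2:ℝ≥0∞) ^ ((j:ℝ) - 2) < v then v else 0)
      ≤ ∑' j : ℤ, (2:ℝ≥0∞) ^ (p + 2) * v * f j := ENNReal.tsum_le_tsum step1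
    _ = (2:ℝ≥0∞) ^ (p + 2) * v * ∑' j : ℤ, f j := ENNReal.tsum_mul_left
    _ = (2:ℝ≥0∞) ^ (p + 2) * v *
        ((2:ℝ≥0∞) ^ ((K:ℝ) * (p - 1)) * ((1:ℝ≥0∞) - (2:ℝ≥0∞) ^ (1 - p))⁻¹) := by rw [step2]
    _ ≤ (2:ℝ≥0∞) ^ (p + 2) * v *
        (((2:ℝ≥0∞) ^ (2 * (p - 1)) * v ^ (p - 1)) * ((1:ℝ≥0∞) - (2:ℝ≥0∞) ^ (1 - p))⁻¹) := by
        gcongr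
    _ = ((2:ℝ≥0∞) ^ (p + 2) * (2:ℝ≥0∞) ^ (2 * (p - 1))) *
        ((1:ℝ≥0∞) - (2:ℝ≥0∞) ^ (1 - p))⁻¹ * (v * v ^ (p - 1)) := by ring
    _ = (2:ℝ≥0∞) ^ (3 * p) * ((1:ℝ≥0∞) - (2:ℝ≥0∞) ^ (1 - p))⁻¹ * v ^ p := by
        rw [← ENNReal.rpow_add _ _ two_ne_zero' two_ne_top',
          show p + 2 + 2 * (p - 1) = 3 * p by ring, hvmul]

/-- Strong (p,p) bound for the Hardy–Littlewood maximal operator. -/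
lemma exists_strong_bound (hn : 1 ≤ n) {p : ℝ} (hp : 1 < p) :
    ∃ C : ℝ≥0∞, C ≠ 0 ∧ C ≠ ∞ ∧ ∀ g : (Fin n → ℝ) → ℝ≥0∞, Measurable g →
      ∫⁻ x, HLM n g x ^ p ≤ C * ∫⁻ x, g x ^ p := by
  set Dp : ℝ≥0∞ := (2:ℝ≥0∞) ^ (3 * p) * ((1:ℝ≥0∞) - (2:ℝ≥0∞) ^ (1 - p))⁻¹ with hDp
  have hDpt : Dp ≠ ∞ :=
    ENNReal.mul_ne_top (rpow_ne_top' two_ne_zero' two_ne_top' _) (geom_denom_inv_ne_top hp)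
  refine ⟨4 ^ n * Dp + 1, by simp, ?_, ?_⟩
  · exact ENNReal.add_ne_top.2 ⟨ENNReal.mul_ne_top (by simp) hDpt, by simp⟩
  intro g hg
  set Jg : ℝ≥0∞ := ∫⁻ x, g x ^ p with hJg
  rcases eq_or_ne Jg ∞ with hJ | hJ
  · rw [hJ, ENNReal.mul_top (by simp)]
    exact le_top
  have hMg : Measurable (HLM n g) := measurable_HLM g
  -- lam / 2 computations
  have hhalf : ∀ a : ℝ, ((2:ℝ≥0∞) ^ a) / 2 = (2:ℝ≥0∞) ^ (a - 1) := by
    intro a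
    rw [div_eq_mul_inv, ← ENNReal.rpow_neg_one 2,
      ← ENNReal.rpow_add _ _ two_ne_zero' two_ne_top', show a + (-1:ℝ) = a - 1 by ring]
  have hrp0 : ∀ a : ℝ, (2:ℝ≥0∞) ^ a ≠ 0 := fun a => (ENNReal.rpow_pos (by norm_num) two_ne_top').ne'
  have hrpt : ∀ a : ℝ, (2:ℝ≥0∞) ^ a ≠ ∞ := fun a => rpow_ne_top' two_ne_zero' two_ne_top' a
  -- the basic level-set bound, for lam = 2^a
  have hlevel : ∀ a : ℝ, volume {x | (2:ℝ≥0∞) ^ a < HLM n g x} ≤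
      4 ^ n * (2:ℝ≥0∞) ^ (1 - a) * ((2:ℝ≥0∞) ^ ((a - 1) * (1 - p)) * Jg) := by
    intro a
    have hfin : ∫⁻ y in {y | (2:ℝ≥0∞) ^ a / 2 < g y}, g y < ∞ := by
      rw [hhalf a]
      refine lt_of_le_of_lt (lintegral_above hp hg (hrp0 _) (hrpt _)) ?_
      exact ENNReal.mul_lt_top (lt_top_iff_ne_top.2 (rpow_ne_top' (hrp0 _) (hrpt _) _))
        (lt_top_iff_ne_top.2 hJ)
    refine le_trans (split_weak hn hg (hrp0 a) (hrpt a) hfin) ?_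
    rw [hhalf a]
    have h1 : ((2:ℝ≥0∞) ^ (a - 1))⁻¹ = (2:ℝ≥0∞) ^ (1 - a) := by
      rw [← ENNReal.rpow_neg, show -(a - 1) = 1 - a by ring]
    rw [h1]
    refine mul_le_mul_right ?_ _
    have := lintegral_above hp hg (hrp0 (a - 1)) (hrpt (a - 1))
    rw [← ENNReal.rpow_mul] at this
    exact this
  -- volume of {Mg = ∞} is zero
  have hinf : volume {x | HLM n g x = ∞} = 0 := by
    have hm : ∀ m : ℕ, volume {x | HLM n g x = ∞} ≤
        (4 ^ n * (2:ℝ≥0∞) ^ p * Jg) * ((2:ℝ≥0∞) ^ (-p)) ^ m := by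
      intro m
      have hsub : {x | HLM n g x = ∞} ⊆ {x | (2:ℝ≥0∞) ^ ((m:ℝ)) < HLM n g x} := by
        intro x hx
        have : HLM n g x = ∞ := hx
        simp only [Set.mem_setOf_eq, this]
        exact lt_top_iff_ne_top.2 (hrpt _)
      refine le_trans (measure_mono hsub) ((hlevel (m:ℝ)).trans (le_of_eq ?_))
      have hpow : ((2:ℝ≥0∞) ^ (-p)) ^ m = (2:ℝ≥0∞) ^ ((m:ℝ) * (-p)) := by
        rw [← ENNReal.rpow_natCast ((2:ℝ≥0∞) ^ (-p)) m, ← ENNReal.rpow_mul]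
        congr 1; ring
      have h2 : (2:ℝ≥0∞) ^ (1 - (m:ℝ)) * (2:ℝ≥0∞) ^ (((m:ℝ) - 1) * (1 - p)) =
          (2:ℝ≥0∞) ^ p * (2:ℝ≥0∞) ^ ((m:ℝ) * (-p)) := by
        rw [← ENNReal.rpow_add _ _ two_ne_zero' two_ne_top',
          ← ENNReal.rpow_add _ _ two_ne_zero' two_ne_top']
        congr 1; ring
      calc 4 ^ n * (2:ℝ≥0∞) ^ (1 - (m:ℝ)) * ((2:ℝ≥0∞) ^ (((m:ℝ) - 1) * (1 - p)) * Jg)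
          = 4 ^ n * ((2:ℝ≥0∞) ^ (1 - (m:ℝ)) * (2:ℝ≥0∞) ^ (((m:ℝ) - 1) * (1 - p))) * Jg := by
            ring
        _ = 4 ^ n * ((2:ℝ≥0∞) ^ p * (2:ℝ≥0∞) ^ ((m:ℝ) * (-p))) * Jg := by rw [h2]
        _ = (4 ^ n * (2:ℝ≥0∞) ^ p * Jg) * ((2:ℝ≥0∞) ^ (-p)) ^ m := by rw [hpow]; ring
    have htend : Filter.Tendsto (fun m : ℕ =>
        (4 ^ n * (2:ℝ≥0∞) ^ p * Jg) * ((2:ℝ≥0∞) ^ (-p)) ^ m) Filter.atTop (nhds 0) := by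
      have hr : (2:ℝ≥0∞) ^ (-p) < 1 :=
        ENNReal.rpow_lt_one_of_one_lt_of_neg (by norm_num) (by linarith)
      have h0 := ENNReal.tendsto_pow_atTop_nhds_zero_of_lt_one hr
      have := ENNReal.Tendsto.const_mul (a := 4 ^ n * (2:ℝ≥0∞) ^ p * Jg) h0
        (Or.inr (ENNReal.mul_ne_top (ENNReal.mul_ne_top (by simp) (hrpt _)) hJ))
      simpa using this
    have hle0 : volume {x | HLM n g x = ∞} ≤ 0 :=
      ge_of_tendsto htend (Filter.Eventually.of_forall hm)
    exact le_antisymm hle0 (zero_le)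
  -- level sets
  set A : ℤ → Set (Fin n → ℝ) :=
    fun j => {x | (2:ℝ≥0∞) ^ ((j:ℝ)) ≤ HLM n g x ∧ HLM n g x < (2:ℝ≥0∞) ^ ((j:ℝ) + 1)} with hA
  have hAm : ∀ j : ℤ, MeasurableSet (A j) := by
    intro j
    exact (hMg measurableSet_Ici).inter (hMg measurableSet_Iio)
  -- pointwise bound
  have hpt : ∀ x, HLM n g x ^ p ≤
      (∑' j : ℤ, (A j).indicator (fun _ => ((2:ℝ≥0∞) ^ ((j:ℝ) + 1)) ^ p) x) +
      ({x | HLM n g x = ∞}).indicator (fun _ => ∞) x := by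
    intro x
    rcases eq_or_ne (HLM n g x) ∞ with htop | htop
    · rw [Set.indicator_of_mem (show x ∈ {x | HLM n g x = ∞} from htop), add_top]
      exact le_top
    rcases eq_or_ne (HLM n g x) 0 with h0 | h0
    · rw [h0, ENNReal.zero_rpow_of_pos (by linarith)]
      exact zero_le
    obtain ⟨J, hJ1, hJ2⟩ := ENNReal.exists_mem_Ico_zpow h0 htop (by norm_num : (1:ℝ≥0∞) < 2)
      two_ne_top'
    have hxA : x ∈ A J := by
      constructor
      · rw [show ((J:ℝ)) = ((J:ℤ):ℝ) by norm_num, ENNReal.rpow_intCast]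
        exact hJ1
      · rw [show (J:ℝ) + 1 = ((J + 1 : ℤ):ℝ) by push_cast; ring, ENNReal.rpow_intCast]
        exact hJ2
    calc HLM n g x ^ p ≤ ((2:ℝ≥0∞) ^ ((J:ℝ) + 1)) ^ p := by
          refine ENNReal.rpow_le_rpow ?_ (by linarith)
          rw [show (J:ℝ) + 1 = ((J + 1 : ℤ):ℝ) by push_cast; ring, ENNReal.rpow_intCast]
          exact hJ2.le
      _ = (A J).indicator (fun _ => ((2:ℝ≥0∞) ^ ((J:ℝ) + 1)) ^ p) x := by
          rw [Set.indicator_of_mem hxA]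
      _ ≤ ∑' j : ℤ, (A j).indicator (fun _ => ((2:ℝ≥0∞) ^ ((j:ℝ) + 1)) ^ p) x :=
          ENNReal.le_tsum J
      _ ≤ _ := le_self_add
  -- integrate the pointwise bound
  have hint1 : ∫⁻ x, HLM n g x ^ p ≤
      ∑' j : ℤ, ((2:ℝ≥0∞) ^ ((j:ℝ) + 1)) ^ p * volume (A j) := by
    have hs : MeasurableSet {x | HLM n g x = ∞} := hMg (measurableSet_singleton ∞)
    refine le_trans (lintegral_mono hpt) ?_
    rw [lintegral_add_right _ (measurable_const.indicator hs),
      lintegral_indicator hs, setLIntegral_const, hinf, mul_zero, add_zero,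
      lintegral_tsum fun j => ((measurable_const.indicator (hAm j))).aemeasurable]
    refine ENNReal.tsum_le_tsum fun j => ?_
    rw [lintegral_indicator (hAm j), setLIntegral_const]
  -- estimate each term
  have hterm : ∀ j : ℤ, ((2:ℝ≥0∞) ^ ((j:ℝ) + 1)) ^ p * volume (A j) ≤
      4 ^ n * ∫⁻ x, (2:ℝ≥0∞) ^ (((j:ℝ) + 1) * p) * (2:ℝ≥0∞) ^ (2 - (j:ℝ)) *
        ({y | (2:ℝ≥0∞) ^ ((j:ℝ) - 2) < g y}).indicator g x := by
    intro j
    have hAsub : A j ⊆ {x | (2:ℝ≥0∞) ^ ((j:ℝ) - 1) < HLM n g x} := by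
      intro x hx
      exact lt_of_lt_of_le
        (ENNReal.rpow_lt_rpow_of_exponent_lt (by norm_num) two_ne_top' (by linarith)) hx.1
    have hSm : MeasurableSet {y | (2:ℝ≥0∞) ^ ((j:ℝ) - 2) < g y} := hg measurableSet_Ioi
    have hfin : ∫⁻ y in {y | (2:ℝ≥0∞) ^ ((j:ℝ) - 1) / 2 < g y}, g y < ∞ := by
      rw [hhalf]
      refine lt_of_le_of_lt (lintegral_above hp hg (hrp0 _) (hrpt _)) ?_
      exact ENNReal.mul_lt_top (lt_top_iff_ne_top.2 (rpow_ne_top' (hrp0 _) (hrpt _) _))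
        (lt_top_iff_ne_top.2 hJ)
    have h1 : volume (A j) ≤
        4 ^ n * ((2:ℝ≥0∞) ^ ((j:ℝ) - 2))⁻¹ * ∫⁻ y in {y | (2:ℝ≥0∞) ^ ((j:ℝ) - 2) < g y}, g y := by
      refine le_trans (measure_mono hAsub) ?_
      have := split_weak hn hg (hrp0 ((j:ℝ) - 1)) (hrpt ((j:ℝ) - 1)) hfin
      rw [hhalf ((j:ℝ) - 1), show (j:ℝ) - 1 - 1 = (j:ℝ) - 2 by ring] at this
      exact this
    calc ((2:ℝ≥0∞) ^ ((j:ℝ) + 1)) ^ p * volume (A j)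
        ≤ ((2:ℝ≥0∞) ^ ((j:ℝ) + 1)) ^ p * (4 ^ n * ((2:ℝ≥0∞) ^ ((j:ℝ) - 2))⁻¹ *
          ∫⁻ y in {y | (2:ℝ≥0∞) ^ ((j:ℝ) - 2) < g y}, g y) := mul_le_mul_right h1 _
      _ = 4 ^ n * ((2:ℝ≥0∞) ^ (((j:ℝ) + 1) * p) * (2:ℝ≥0∞) ^ (2 - (j:ℝ)) *
          ∫⁻ y in {y | (2:ℝ≥0∞) ^ ((j:ℝ) - 2) < g y}, g y) := by
          rw [← ENNReal.rpow_mul, ← ENNReal.rpow_neg, show -((j:ℝ) - 2) = 2 - (j:ℝ) by ring]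
          ring
      _ = 4 ^ n * ∫⁻ x, (2:ℝ≥0∞) ^ (((j:ℝ) + 1) * p) * (2:ℝ≥0∞) ^ (2 - (j:ℝ)) *
          ({y | (2:ℝ≥0∞) ^ ((j:ℝ) - 2) < g y}).indicator g x := by
          have : ∫⁻ x, (2:ℝ≥0∞) ^ (((j:ℝ) + 1) * p) * (2:ℝ≥0∞) ^ (2 - (j:ℝ)) *
              ({y | (2:ℝ≥0∞) ^ ((j:ℝ) - 2) < g y}).indicator g x =
              (2:ℝ≥0∞) ^ (((j:ℝ) + 1) * p) * (2:ℝ≥0∞) ^ (2 - (j:ℝ)) *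
              ∫⁻ x, ({y | (2:ℝ≥0∞) ^ ((j:ℝ) - 2) < g y}).indicator g x := by
            simp only [mul_assoc]
            rw [lintegral_const_mul _ ((hg.indicator hSm).const_mul _),
              lintegral_const_mul _ (hg.indicator hSm)]
          rw [this, lintegral_indicator hSm]
  -- sum up
  calc ∫⁻ x, HLM n g x ^ p
      ≤ ∑' j : ℤ, ((2:ℝ≥0∞) ^ ((j:ℝ) + 1)) ^ p * volume (A j) := hint1
    _ ≤ ∑' j : ℤ, 4 ^ n * ∫⁻ x, (2:ℝ≥0∞) ^ (((j:ℝ) + 1) * p) * (2:ℝ≥0∞) ^ (2 - (j:ℝ)) *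
          ({y | (2:ℝ≥0∞) ^ ((j:ℝ) - 2) < g y}).indicator g x := ENNReal.tsum_le_tsum hterm
    _ = 4 ^ n * ∫⁻ x, ∑' j : ℤ, (2:ℝ≥0∞) ^ (((j:ℝ) + 1) * p) * (2:ℝ≥0∞) ^ (2 - (j:ℝ)) *
          ({y | (2:ℝ≥0∞) ^ ((j:ℝ) - 2) < g y}).indicator g x := by
        rw [ENNReal.tsum_mul_left, ← lintegral_tsum]
        intro j
        exact ((measurable_const.mul measurable_const).mul
          (hg.indicator (hg measurableSet_Ioi))).aemeasurable
    _ ≤ 4 ^ n * ∫⁻ x, Dp * g x ^ p := by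
        refine mul_le_mul_right (lintegral_mono fun x => ?_) _
        have := geom_sum_bound hp (g x)
        refine le_trans (le_of_eq ?_) this
        congr 1
        funext j
        congr 1
        rw [Set.indicator_apply]
        simp only [Set.mem_setOf_eq]
    _ = 4 ^ n * Dp * Jg := by
        rw [lintegral_const_mul _ (by fun_prop), hDp, hJg]
        ring
    _ ≤ (4 ^ n * Dp + 1) * Jg := mul_le_mul_left le_self_add _

end S2

namespace S2

variable {n : ℕ}

/-- Antitone rpow for nonpositive exponents. -/
lemma rpow_le_rpow_neg {x y : ℝ≥0∞} (h : x ≤ y) {z : ℝ} (hz : z ≤ 0) : y ^ z ≤ x ^ z := by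
  have h1 : x ^ (-z) ≤ y ^ (-z) := ENNReal.rpow_le_rpow h (by linarith)
  have e1 : y ^ z = (y ^ (-z))⁻¹ := by rw [← ENNReal.rpow_neg, neg_neg]
  have e2 : x ^ z = (x ^ (-z))⁻¹ := by rw [← ENNReal.rpow_neg, neg_neg]
  rw [e1, e2]
  exact ENNReal.inv_le_inv' h1

lemma iSup_rpow_nat {a : ℕ → ℝ≥0∞} {p : ℝ} (hp : 0 < p) :
    (⨆ m, a m) ^ p = ⨆ m, a m ^ p := by
  apply le_antisymm
  · have h : ∀ m, a m ≤ (⨆ m, a m ^ p) ^ (1 / p) := by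
      intro m
      have : a m = (a m ^ p) ^ (1 / p) := by
        rw [← ENNReal.rpow_mul, mul_one_div_cancel hp.ne', ENNReal.rpow_one]
      rw [this]
      exact ENNReal.rpow_le_rpow (le_iSup (fun m => a m ^ p) m) (by positivity)
    have h2 : (⨆ m, a m) ≤ (⨆ m, a m ^ p) ^ (1 / p) := iSup_le h
    calc (⨆ m, a m) ^ p ≤ ((⨆ m, a m ^ p) ^ (1 / p)) ^ p := ENNReal.rpow_le_rpow h2 hp.le
      _ = ⨆ m, a m ^ p := by
        rw [← ENNReal.rpow_mul, one_div_mul_cancel hp.ne', ENNReal.rpow_one]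
  · exact iSup_le fun m => ENNReal.rpow_le_rpow (le_iSup a m) hp.le

/-- Minkowski inequality for series in `L^p`, `p ≥ 1`. -/
lemma lpNormE_tsum_le {p : ℝ} (hp : 1 ≤ p) {G : ℕ → (Fin n → ℝ) → ℝ≥0∞}
    (hG : ∀ k, Measurable (G k)) :
    lpNormE n p (fun x => ∑' k, G k x) ≤ ∑' k, lpNormE n p (G k) := by
  have hp0 : (0:ℝ) < p := by linarith
  set FS : ℕ → (Fin n → ℝ) → ℝ≥0∞ := fun m x => ∑ k ∈ Finset.range m, G k x with hFS
  have hFSm : ∀ m, Measurable (FS m) := by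
    intro m
    apply Finset.measurable_sum
    exact fun k _ => hG k
  have hfin : ∀ m, (∫⁻ x, FS m x ^ p) ^ (1 / p) ≤ ∑ k ∈ Finset.range m, lpNormE n p (G k) := by
    intro m
    induction m with
    | zero =>
        simp only [hFS, Finset.range_zero, Finset.sum_empty]
        rw [show (∫⁻ _ : Fin n → ℝ, (0:ℝ≥0∞) ^ p) = 0 by simp [ENNReal.zero_rpow_of_pos hp0]]
        simp [ENNReal.zero_rpow_of_pos (show (0:ℝ) < 1/p by positivity)]
        positivity
    | succ m ih =>
        have heq : ∀ x, FS (m + 1) x = FS m x + G m x := by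
          intro x
          rw [hFS]
          exact Finset.sum_range_succ _ m
        calc (∫⁻ x, FS (m+1) x ^ p) ^ (1 / p)
            = (∫⁻ x, (FS m x + G m x) ^ p) ^ (1 / p) := by
              congr 1
              exact lintegral_congr fun x => by rw [heq x]
          _ ≤ (∫⁻ x, FS m x ^ p) ^ (1 / p) + (∫⁻ x, G m x ^ p) ^ (1 / p) :=
              ENNReal.lintegral_Lp_add_le (hFSm m).aemeasurable (hG m).aemeasurable hp
          _ ≤ (∑ k ∈ Finset.range m, lpNormE n p (G k)) + lpNormE n p (G m) :=
              add_le_add ih le_rfl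
          _ = ∑ k ∈ Finset.range (m+1), lpNormE n p (G k) := (Finset.sum_range_succ _ m).symm
  have hmono : Monotone FS := by
    intro i j hij x
    exact Finset.sum_le_sum_of_subset (Finset.range_subset_range.2 hij)
  have htsum : ∀ x, (∑' k, G k x) = ⨆ m, FS m x := fun x => ENNReal.tsum_eq_iSup_nat
  unfold lpNormE
  calc (∫⁻ x, (∑' k, G k x) ^ p) ^ (1 / p)
      = (∫⁻ x, ⨆ m, FS m x ^ p) ^ (1 / p) := by
        congr 1
        refine lintegral_congr fun x => ?_
        rw [htsum x, iSup_rpow_nat hp0]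
    _ = (⨆ m, ∫⁻ x, FS m x ^ p) ^ (1 / p) := by
        congr 1
        refine lintegral_iSup (fun m => by fun_prop) ?_
        intro i j hij x
        exact ENNReal.rpow_le_rpow (hmono hij x) hp0.le
    _ = ⨆ m, (∫⁻ x, FS m x ^ p) ^ (1 / p) := iSup_rpow_nat (by positivity)
    _ ≤ ∑' k, lpNormE n p (G k) := by
        refine iSup_le fun m => (hfin m).trans ?_
        exact ENNReal.sum_le_tsum _

lemma lpNormE_const_mul {p : ℝ} (hp : 0 < p) (c : ℝ≥0∞) {g : (Fin n → ℝ) → ℝ≥0∞}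
    (hg : Measurable g) : lpNormE n p (fun x => c * g x) = c * lpNormE n p g := by
  unfold lpNormE
  have : ∀ x, (c * g x) ^ p = c ^ p * g x ^ p := fun x => ENNReal.mul_rpow_of_nonneg _ _ hp.le
  simp only [this]
  rw [lintegral_const_mul _ (by fun_prop), ENNReal.mul_rpow_of_nonneg _ _ (by positivity),
    ← ENNReal.rpow_mul, mul_one_div_cancel hp.ne', ENNReal.rpow_one]

lemma lpNormE_mono {p : ℝ} (hp : 0 < p) {g g' : (Fin n → ℝ) → ℝ≥0∞} (h : ∀ x, g x ≤ g' x) :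
    lpNormE n p g ≤ lpNormE n p g' :=
  ENNReal.rpow_le_rpow (lintegral_mono fun x => ENNReal.rpow_le_rpow (h x) hp.le)
    (by positivity)

lemma HLM_tsum_le {G : ℕ → (Fin n → ℝ) → ℝ≥0∞} (hG : ∀ k, Measurable (G k)) (x : Fin n → ℝ) :
    HLM n (fun y => ∑' k, G k y) x ≤ ∑' k, HLM n (G k) x := by
  refine HLM_le fun Q hQ hx => ?_
  unfold setAvg
  rw [lintegral_tsum fun k => (hG k).aemeasurable]
  rw [← ENNReal.tsum_mul_left]
  exact ENNReal.tsum_le_tsum fun k => setAvg_le_HLM hQ hx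

lemma HLM_const_mul_le (c : ℝ≥0∞) {g : (Fin n → ℝ) → ℝ≥0∞} (hg : Measurable g)
    (x : Fin n → ℝ) : HLM n (fun y => c * g y) x ≤ c * HLM n g x := by
  refine HLM_le fun Q hQ hx => ?_
  unfold setAvg
  rw [lintegral_const_mul _ hg, ← mul_assoc, mul_comm (volume Q)⁻¹ c, mul_assoc]
  exact mul_le_mul_right (setAvg_le_HLM hQ hx) _

/-- Hölder on a set: `∫_Q g ≤ (∫ g^p)^{1/p} (vol Q)^{1-1/p}`. -/
lemma setLIntegral_le_holder {p : ℝ} (hp : 1 < p) {g : (Fin n → ℝ) → ℝ≥0∞}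
    (hg : Measurable g) (Q : Set (Fin n → ℝ)) :
    ∫⁻ y in Q, g y ≤ (∫⁻ y, g y ^ p) ^ (1 / p) * volume Q ^ (1 - 1 / p) := by
  have hpq : p.HolderConjugate (p / (p - 1)) := Real.HolderConjugate.conjExponent hp
  have h := ENNReal.lintegral_mul_le_Lp_mul_Lq (volume.restrict Q) hpq hg.aemeasurable
    (aemeasurable_const : AEMeasurable (fun _ => (1:ℝ≥0∞)) _)
  simp only [Pi.mul_apply, mul_one, ENNReal.one_rpow] at h
  calc ∫⁻ y in Q, g y ≤ (∫⁻ y in Q, g y ^ p) ^ (1 / p) *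
        (∫⁻ _ in Q, (1:ℝ≥0∞)) ^ (1 / (p / (p - 1))) := h
    _ ≤ (∫⁻ y, g y ^ p) ^ (1 / p) * volume Q ^ (1 - 1 / p) := by
        refine mul_le_mul ?_ ?_ (zero_le) (zero_le)
        · exact ENNReal.rpow_le_rpow (setLIntegral_le_lintegral _ _) (by positivity)
        · rw [setLIntegral_one]
          refine le_of_eq ?_
          congr 1
          field_simp

end S2

namespace S2

variable {n : ℕ}

lemma lpNormE_congr_ae {p : ℝ} {g g' : (Fin n → ℝ) → ℝ≥0∞} (h : g =ᵐ[volume] g') :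
    lpNormE n p g = lpNormE n p g' := by
  unfold lpNormE
  congr 1
  exact lintegral_congr_ae (h.mono fun x hx => by dsimp only; rw [hx])

lemma ae_zero_of_lpNormE_zero {p : ℝ} (hp : 0 < p) {g : (Fin n → ℝ) → ℝ≥0∞}
    (hg : Measurable g) (h : lpNormE n p g = 0) : g =ᵐ[volume] 0 := by
  unfold lpNormE at h
  rw [ENNReal.rpow_eq_zero_iff] at h
  have hint : ∫⁻ x, g x ^ p = 0 := by
    rcases h with ⟨h0, -⟩ | ⟨-, hneg⟩
    · exact h0
    · exfalso
      have : (0:ℝ) < 1 / p := by positivity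
      linarith
  have := (lintegral_eq_zero_iff (by fun_prop : Measurable fun x => g x ^ p)).1 hint
  refine this.mono fun x hx => ?_
  simp only [Pi.zero_apply] at hx ⊢
  rcases (ENNReal.rpow_eq_zero_iff).1 hx with ⟨h0, -⟩ | ⟨-, hneg⟩
  · exact h0
  · linarith

lemma HLM_zero_fun : HLM n (fun _ => (0:ℝ≥0∞)) = fun _ => 0 := by
  funext x
  refine le_antisymm (HLM_le fun Q hQ hx => ?_) (zero_le)
  unfold setAvg
  simp

lemma lpNormE_zero {p : ℝ} (hp : 0 < p) : lpNormE n p (fun _ : Fin n → ℝ => (0:ℝ≥0∞)) = 0 := by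
  unfold lpNormE
  rw [show (∫⁻ _ : Fin n → ℝ, (0:ℝ≥0∞) ^ p) = 0 by simp [ENNReal.zero_rpow_of_pos hp]]
  simp [ENNReal.zero_rpow_of_pos (show (0:ℝ) < 1/p by positivity)]
  positivity

lemma maximalOpNorm_mem {p : ℝ} (hp : 1 < p) (f : (Fin n → ℝ) → ℝ) (hf : Measurable f)
    (hfin : lpNorm n p f < ∞) :
    lpNormE n p (HLM n fun y => (‖f y‖₊ : ℝ≥0∞)) ≤ maximalOpNorm n p * lpNorm n p f := by
  rcases eq_or_ne (lpNorm n p f) 0 with h0 | h0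
  · have hF0 : (fun y => (‖f y‖₊:ℝ≥0∞)) =ᵐ[volume] (fun _ => 0) :=
      ae_zero_of_lpNormE_zero (by linarith) (by fun_prop) h0
    rw [HLM_congr_ae hF0, HLM_zero_fun, lpNormE_zero (by linarith : (0:ℝ) < p)]
    exact zero_le
  · have hdiv : lpNormE n p (HLM n fun y => (‖f y‖₊ : ℝ≥0∞)) / lpNorm n p f ≤
        maximalOpNorm n p := by
      refine le_sInf fun C hC => ?_
      rw [ENNReal.div_le_iff_le_mul (Or.inl h0) (Or.inl hfin.ne)]
      exact hC f hf hfin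
    rwa [ENNReal.div_le_iff_le_mul (Or.inl h0) (Or.inl hfin.ne)] at hdiv

lemma maximalOpNorm_ne_top (hn : 1 ≤ n) {p : ℝ} (hp : 1 < p) : maximalOpNorm n p ≠ ∞ := by
  obtain ⟨C, hC0, hCt, hC⟩ := exists_strong_bound hn hp
  have hmem : C ^ (1/p) ∈ {C : ℝ≥0∞ | ∀ f : (Fin n → ℝ) → ℝ, Measurable f →
      lpNorm n p f < ∞ → lpNormE n p (HLM n fun y => (‖f y‖₊ : ℝ≥0∞)) ≤ C * lpNorm n p f} := by
    intro f hf hfin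
    have h1 := hC (fun y => (‖f y‖₊ : ℝ≥0∞)) (by fun_prop)
    unfold lpNormE _root_.lpNorm
    calc (∫⁻ x, HLM n (fun y => (‖f y‖₊:ℝ≥0∞)) x ^ p) ^ (1/p)
        ≤ (C * ∫⁻ x, ((‖f x‖₊:ℝ≥0∞)) ^ p) ^ (1/p) := ENNReal.rpow_le_rpow h1 (by positivity)
      _ = C ^ (1/p) * (∫⁻ x, ((‖f x‖₊:ℝ≥0∞)) ^ p) ^ (1/p) :=
          ENNReal.mul_rpow_of_nonneg _ _ (by positivity)
  exact ne_top_of_le_ne_top (rpow_ne_top' hC0 hCt _) (sInf_le hmem)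

lemma one_le_maximalOpNorm {p : ℝ} (hp : 0 < p) : 1 ≤ maximalOpNorm n p := by
  refine le_sInf fun C hC => ?_
  classical
  set B : Set (Fin n → ℝ) := Metric.closedBall 0 1 with hB
  have hBcube : IsCube n B := isCube_closedBall 0 one_pos
  set f : (Fin n → ℝ) → ℝ := B.indicator (fun _ => (1:ℝ)) with hf
  have hfm : Measurable f := measurable_const.indicator measurableSet_closedBall
  have hFeq : ∀ x, (‖f x‖₊:ℝ≥0∞) = B.indicator (fun _ => (1:ℝ≥0∞)) x := by
    intro x
    by_cases hx : x ∈ B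
    · rw [hf]
      simp [Set.indicator_of_mem hx]
    · rw [hf]
      simp [Set.indicator_of_notMem hx]
  have hFp : ∀ x, (‖f x‖₊:ℝ≥0∞) ^ p = B.indicator (fun _ => (1:ℝ≥0∞)) x := by
    intro x
    rw [hFeq x]
    by_cases hx : x ∈ B
    · simp [Set.indicator_of_mem hx]
    · simp [Set.indicator_of_notMem hx, ENNReal.zero_rpow_of_pos hp]
  set V : ℝ≥0∞ := volume B with hV
  have hV0 : V ≠ 0 := (cube_volume_pos hBcube).ne'
  have hVt : V ≠ ∞ := cube_volume_ne_top hBcube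
  have hnorm : lpNorm n p f = V ^ (1/p) := by
    unfold _root_.lpNorm
    rw [lintegral_congr hFp, lintegral_indicator measurableSet_closedBall, setLIntegral_one]
  have hfin : lpNorm n p f < ∞ := by
    rw [hnorm]
    exact ENNReal.rpow_lt_top_of_nonneg (by positivity) hVt
  have hupper := hC f hfm hfin
  -- lower bound for the maximal function
  have hintB : ∫⁻ y in B, (‖f y‖₊:ℝ≥0∞) = V := by
    rw [show (∫⁻ y in B, (‖f y‖₊:ℝ≥0∞)) = ∫⁻ y in B, 1 from
      setLIntegral_congr_fun measurableSet_closedBall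
        (fun y hy => by rw [hFeq y, Set.indicator_of_mem hy]),
      setLIntegral_one]
  have hMlow : ∀ x ∈ B, (1:ℝ≥0∞) ≤ HLM n (fun y => (‖f y‖₊:ℝ≥0∞)) x := by
    intro x hx
    have := setAvg_le_HLM (g := fun y => (‖f y‖₊:ℝ≥0∞)) hBcube hx
    unfold setAvg at this
    rw [hintB, ENNReal.inv_mul_cancel hV0 hVt] at this
    exact this
  have hlow : V ^ (1/p) ≤ lpNormE n p (HLM n fun y => (‖f y‖₊:ℝ≥0∞)) := by
    unfold lpNormE
    refine ENNReal.rpow_le_rpow ?_ (by positivity)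
    calc V = ∫⁻ _ in B, 1 := by rw [setLIntegral_one]
      _ ≤ ∫⁻ x in B, HLM n (fun y => (‖f y‖₊:ℝ≥0∞)) x ^ p := by
          refine setLIntegral_mono (by fun_prop) fun x hx => ?_
          calc (1:ℝ≥0∞) = 1 ^ p := (ENNReal.one_rpow p).symm
            _ ≤ HLM n (fun y => (‖f y‖₊:ℝ≥0∞)) x ^ p :=
                ENNReal.rpow_le_rpow (hMlow x hx) hp.le
      _ ≤ ∫⁻ x, HLM n (fun y => (‖f y‖₊:ℝ≥0∞)) x ^ p := setLIntegral_le_lintegral _ _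
  have hVp0 : V ^ (1/p) ≠ 0 := by
    rw [ne_eq, ENNReal.rpow_eq_zero_iff]
    push_neg
    exact ⟨fun h => absurd h hV0, fun h => absurd h hVt⟩
  have hVpt : V ^ (1/p) ≠ ∞ := rpow_ne_top' hV0 hVt _
  have hfinal : 1 * V ^ (1/p) ≤ C * V ^ (1/p) := by
    rw [one_mul]
    calc V ^ (1/p) ≤ lpNormE n p (HLM n fun y => (‖f y‖₊:ℝ≥0∞)) := hlow
      _ ≤ C * lpNorm n p f := hupper
      _ = C * V ^ (1/p) := by rw [hnorm]
  exact (ENNReal.mul_le_mul_iff_left hVp0 hVpt).1 hfinal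

/-- `ℝ≥0∞`-valued version of the maximal-operator norm bound. -/
lemma maximalOpNorm_memE {p : ℝ} (hp : 1 < p) {g : (Fin n → ℝ) → ℝ≥0∞} (hg : Measurable g)
    (hfin : lpNormE n p g < ∞) :
    lpNormE n p (HLM n g) ≤ maximalOpNorm n p * lpNormE n p g := by
  set g' : (Fin n → ℝ) → ℝ := fun x => (g x).toReal with hg'
  have hintfin : ∫⁻ x, g x ^ p ≠ ∞ := by
    intro hcon
    unfold lpNormE at hfin
    rw [hcon, ENNReal.top_rpow_of_pos (by positivity : (0:ℝ) < 1/p)] at hfin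
    exact (lt_irrefl _ hfin)
  have hae : g =ᵐ[volume] (fun x => (‖g' x‖₊ : ℝ≥0∞)) := by
    have hlt : ∀ᵐ x ∂(volume : Measure (Fin n → ℝ)), g x ^ p < ∞ :=
      ae_lt_top (by fun_prop) hintfin
    refine hlt.mono fun x hx => ?_
    have hgx : g x ≠ ∞ := by
      intro hcon
      rw [hcon, ENNReal.top_rpow_of_pos (by positivity : (0:ℝ) < p)] at hx
      exact lt_irrefl _ hx
    rw [hg']
    simp only
    rw [← ENNReal.ofReal_coe_nnreal, coe_nnnorm, Real.norm_of_nonneg ENNReal.toReal_nonneg,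
      ENNReal.ofReal_toReal hgx]
  have hnorm_eq : lpNormE n p g = lpNorm n p g' := by
    rw [lpNormE_congr_ae hae]
    rfl
  rw [HLM_congr_ae hae, hnorm_eq]
  exact maximalOpNorm_mem hp g' (by fun_prop) (by rw [← hnorm_eq]; exact hfin)

lemma exists_ball_pos_integral {g : (Fin n → ℝ) → ℝ≥0∞} (hg : Measurable g)
    (h : ¬ g =ᵐ[volume] (fun _ => 0)) :
    ∃ (z₀ : Fin n → ℝ) (r₀ : ℝ), 0 < r₀ ∧ 0 < ∫⁻ y in Metric.closedBall z₀ r₀, g y := by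
  by_contra hcon
  push_neg at hcon
  apply h
  have hnull : ∀ m : ℕ, volume ({x | g x ≠ 0} ∩ Metric.closedBall 0 ((m:ℝ) + 1)) = 0 := by
    intro m
    have hz : ∫⁻ y in Metric.closedBall (0 : Fin n → ℝ) ((m:ℝ) + 1), g y = 0 :=
      le_antisymm (hcon 0 ((m:ℝ)+1) (by positivity)) (zero_le)
    have := (lintegral_eq_zero_iff hg).1 hz
    have hmeas : MeasurableSet {x | g x ≠ 0} := (hg (measurableSet_singleton 0)).compl
    have h2 : (volume.restrict (Metric.closedBall (0 : Fin n → ℝ) ((m:ℝ)+1)))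
        {x | g x ≠ 0} = 0 := by
      rw [Filter.EventuallyEq, ae_iff] at this
      simpa using this
    rwa [Measure.restrict_apply hmeas] at h2
  have hsub : {x | g x ≠ 0} ⊆ ⋃ m : ℕ, ({x | g x ≠ 0} ∩ Metric.closedBall 0 ((m:ℝ) + 1)) := by
    intro x hx
    obtain ⟨m, hm⟩ := exists_nat_ge (dist x (0 : Fin n → ℝ))
    exact Set.mem_iUnion.2 ⟨m, hx, Metric.mem_closedBall.2 (by linarith)⟩
  have : volume {x | g x ≠ 0} = 0 :=
    measure_mono_null hsub (measure_iUnion_null hnull)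
  rw [Filter.EventuallyEq, ae_iff]
  simpa using this

lemma HLM_lower_bound (F : (Fin n → ℝ) → ℝ≥0∞) (z : Fin n → ℝ) {r : ℝ} (hr : 0 < r)
    (z₀ : Fin n → ℝ) {r₀ : ℝ} (hr₀ : 0 < r₀) {x : Fin n → ℝ} (hx : x ∈ Metric.closedBall z r) :
    (volume (Metric.closedBall z (r + dist z z₀ + r₀)))⁻¹ *
      ∫⁻ y in Metric.closedBall z₀ r₀, F y ≤ HLM n F x := by
  set R' : ℝ := r + dist z z₀ + r₀ with hR'
  have hR'pos : 0 < R' := by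
    have := dist_nonneg (x := z) (y := z₀)
    rw [hR']; linarith
  have hxB : x ∈ Metric.closedBall z R' := by
    have hd := Metric.mem_closedBall.1 hx
    have := dist_nonneg (x := z) (y := z₀)
    exact Metric.mem_closedBall.2 (by rw [hR']; linarith)
  have hsub : Metric.closedBall z₀ r₀ ⊆ Metric.closedBall z R' := by
    intro y hy
    have h1 : dist y z ≤ dist y z₀ + dist z₀ z := dist_triangle y z₀ z
    have h2 : dist y z₀ ≤ r₀ := Metric.mem_closedBall.1 hy
    rw [dist_comm z₀ z] at h1
    exact Metric.mem_closedBall.2 (by rw [hR']; linarith)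
  refine le_trans ?_ (setAvg_le_HLM (isCube_closedBall z hR'pos) hxB)
  unfold setAvg
  exact mul_le_mul_right (lintegral_mono_set hsub) _

end S2

namespace S2

variable {n : ℕ}

/-- The main per-function estimate via the Rubio de Francia iteration. -/
lemma main_estimate (hn : 1 ≤ n) {p₀ : ℝ} (hp₀ : 1 < p₀) {β : ℝ} (hβ : 0 ≤ β)
    (T : ((Fin n → ℝ) → ℝ) → (Fin n → ℝ) → ℝ)
    (hT : ∀ f, Measurable f → Measurable (T f))
    (c : ℝ≥0∞)
    (hbound : ∀ w : (Fin n → ℝ) → ℝ≥0∞, IsWeight n w → ApConst n p₀ w < ∞ →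
      ∀ f : (Fin n → ℝ) → ℝ, Measurable f → wLpNorm n p₀ w f < ∞ →
        wLpNorm n p₀ w (T f) ≤ c * ApConst n p₀ w ^ β * wLpNorm n p₀ w f)
    {p : ℝ} (hp1 : 1 < p) (hplt : p < p₀)
    (f : (Fin n → ℝ) → ℝ) (hf : Measurable f) (hfin : lpNorm n p f < ∞) :
    lpNorm n p (T f) ≤
      ((2:ℝ≥0∞) ^ (β * p₀) * 2 * c * maximalOpNorm n p ^ (β * (p₀ - p))) * lpNorm n p f := by
  classical
  have hp0 : (0:ℝ) < p := by linarith
  have hp₀0 : (0:ℝ) < p₀ := by linarith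
  set F : (Fin n → ℝ) → ℝ≥0∞ := fun x => (‖f x‖₊ : ℝ≥0∞) with hF
  have hFm : Measurable F := by fun_prop
  set FT : (Fin n → ℝ) → ℝ≥0∞ := fun x => (‖T f x‖₊ : ℝ≥0∞) with hFT
  have hFTm : Measurable FT := by
    have := hT f hf
    fun_prop
  rcases eq_or_ne (lpNorm n p f) 0 with h0 | h0
  · -- trivial case: f is a.e. zero
    have h0' : lpNormE n p F = 0 := h0
    have hF0 : F =ᵐ[volume] (fun _ => 0) := ae_zero_of_lpNormE_zero hp0 hFm h0'
    have hW1 : IsWeight n (fun _ => (1:ℝ≥0∞)) := by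
      refine ⟨measurable_const, fun Q hQ => ?_⟩
      rw [setLIntegral_one]
      exact (cube_volume_ne_top hQ).lt_top
    have havg1 : ∀ Q : Set (Fin n → ℝ), IsCube n Q →
        setAvg n Q (fun _ => (1:ℝ≥0∞)) = 1 := by
      intro Q hQ
      unfold setAvg
      rw [setLIntegral_one, ENNReal.inv_mul_cancel (cube_volume_pos hQ).ne' (cube_volume_ne_top hQ)]
    have hA1 : ApConst n p₀ (fun _ => (1:ℝ≥0∞)) ≤ 1 := by
      refine iSup_le fun Q => iSup_le fun hQ => ?_
      have h2 : setAvg n Q (fun y => (1:ℝ≥0∞) ^ (1 - p₀/(p₀-1))) = 1 := by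
        simp only [ENNReal.one_rpow]
        exact havg1 Q hQ
      rw [havg1 Q hQ, h2, ENNReal.one_rpow, one_mul]
    have hwf0 : wLpNorm n p₀ (fun _ => (1:ℝ≥0∞)) f = 0 := by
      unfold wLpNorm wLpNormE
      have : ∫⁻ x, (‖f x‖₊:ℝ≥0∞) ^ p₀ * 1 = 0 := by
        rw [show (0:ℝ≥0∞) = ∫⁻ _ : Fin n → ℝ, 0 from (lintegral_zero).symm]
        refine lintegral_congr_ae (hF0.mono fun x hx => ?_)
        have hx' : (‖f x‖₊:ℝ≥0∞) = 0 := hx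
        dsimp only
        rw [hx', ENNReal.zero_rpow_of_pos hp₀0, zero_mul]
      rw [this, ENNReal.zero_rpow_of_pos (by positivity)]
    have hTw := hbound (fun _ => (1:ℝ≥0∞)) hW1 (lt_of_le_of_lt hA1 (by norm_num)) f hf
      (by rw [hwf0]; exact ENNReal.zero_lt_top)
    rw [hwf0, mul_zero] at hTw
    have hTw0 : wLpNorm n p₀ (fun _ => (1:ℝ≥0∞)) (T f) = 0 := le_antisymm hTw (zero_le)
    -- deduce that T f is a.e. zero
    have hint0 : ∫⁻ x, FT x ^ p₀ * 1 = 0 := by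
      unfold wLpNorm wLpNormE at hTw0
      rcases ENNReal.rpow_eq_zero_iff.1 hTw0 with ⟨hz, -⟩ | ⟨-, hneg⟩
      · exact hz
      · exfalso
        have : (0:ℝ) < 1/p₀ := by positivity
        linarith
    have hint0' : ∫⁻ x, FT x ^ p₀ = 0 := by
      rw [← hint0]
      exact lintegral_congr fun x => (mul_one _).symm
    have hT0 : FT =ᵐ[volume] (fun _ => 0) := by
      have := (lintegral_eq_zero_iff (by fun_prop : Measurable fun x => FT x ^ p₀)).1 hint0'
      refine this.mono fun x hx => ?_
      simp only [Pi.zero_apply] at hx ⊢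
      rcases ENNReal.rpow_eq_zero_iff.1 hx with ⟨hz, -⟩ | ⟨-, hneg⟩
      · exact hz
      · linarith
    have : lpNorm n p (T f) = 0 := by
      have h1 : lpNormE n p FT = 0 := by
        rw [lpNormE_congr_ae hT0, lpNormE_zero hp0]
      exact h1
    rw [this, h0, mul_zero]
  -- main case
  set N : ℝ≥0∞ := maximalOpNorm n p with hN
  have hN1 : 1 ≤ N := one_le_maximalOpNorm hp0
  have hNt : N ≠ ∞ := maximalOpNorm_ne_top hn hp1
  have hN0 : N ≠ 0 := by
    intro h
    rw [h] at hN1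
    exact (not_le.2 zero_lt_one) hN1
  set K : ℝ≥0∞ := 2 * N with hK
  have hK0 : K ≠ 0 := mul_ne_zero two_ne_zero' hN0
  have hKt : K ≠ ∞ := ENNReal.mul_ne_top two_ne_top' hNt
  set κ : ℝ≥0∞ := K⁻¹ with hκ
  have hκ0 : κ ≠ 0 := ENNReal.inv_ne_zero.2 hKt
  have hκt : κ ≠ ∞ := ENNReal.inv_ne_top.2 hK0
  have hκK : K * κ = 1 := ENNReal.mul_inv_cancel hK0 hKt
  have hκN : κ * N = 2⁻¹ := by
    rw [hκ, hK, ENNReal.mul_inv (Or.inl two_ne_zero') (Or.inl two_ne_top'), mul_assoc,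
      ENNReal.inv_mul_cancel hN0 hNt, mul_one]
  set Mseq : ℕ → (Fin n → ℝ) → ℝ≥0∞ := fun k => (HLM n)^[k] F with hMseq
  have hM0 : Mseq 0 = F := rfl
  have hMsucc : ∀ k, Mseq (k+1) = HLM n (Mseq k) := fun k => Function.iterate_succ_apply' _ _ _
  have hMmeas : ∀ k, Measurable (Mseq k) := by
    intro k
    induction k with
    | zero => exact hFm
    | succ k ih => rw [hMsucc]; exact measurable_HLM _
  have hMnorm : ∀ k, lpNormE n p (Mseq k) ≤ N ^ k * lpNorm n p f := by
    intro k
    induction k with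
    | zero =>
        rw [hM0, pow_zero, one_mul]
        exact le_rfl
    | succ k ih =>
        have hfink : lpNormE n p (Mseq k) < ∞ :=
          lt_of_le_of_lt ih (ENNReal.mul_lt_top (ENNReal.pow_lt_top hNt.lt_top) hfin)
        rw [hMsucc]
        calc lpNormE n p (HLM n (Mseq k)) ≤ N * lpNormE n p (Mseq k) :=
              maximalOpNorm_memE hp1 (hMmeas k) hfink
          _ ≤ N * (N ^ k * lpNorm n p f) := mul_le_mul_right ih _
          _ = N ^ (k+1) * lpNorm n p f := by ring
  set u : (Fin n → ℝ) → ℝ≥0∞ := fun x => ∑' k, κ ^ k * Mseq k x with hu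
  have humeas : Measurable u := Measurable.ennreal_tsum fun k => measurable_const.mul (hMmeas k)
  have hunorm : lpNormE n p u ≤ 2 * lpNorm n p f := by
    calc lpNormE n p u ≤ ∑' k, lpNormE n p (fun x => κ ^ k * Mseq k x) :=
          lpNormE_tsum_le hp1.le fun k => measurable_const.mul (hMmeas k)
      _ = ∑' k, κ ^ k * lpNormE n p (Mseq k) :=
          tsum_congr fun k => lpNormE_const_mul hp0 _ (hMmeas k)
      _ ≤ ∑' k, κ ^ k * (N ^ k * lpNorm n p f) :=
          ENNReal.tsum_le_tsum fun k => mul_le_mul_right (hMnorm k) _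
      _ = ∑' k, ((2:ℝ≥0∞)⁻¹) ^ k * lpNorm n p f :=
          tsum_congr fun k => by rw [← mul_assoc, ← mul_pow, hκN]
      _ = (1 - 2⁻¹)⁻¹ * lpNorm n p f := by rw [ENNReal.tsum_mul_right, ENNReal.tsum_geometric]
      _ = 2 * lpNorm n p f := by rw [ENNReal.one_sub_inv_two, inv_inv]
  set U : ℝ≥0∞ := ∫⁻ x, u x ^ p with hU
  have hUnormE : lpNormE n p u = U ^ (1/p) := rfl
  have hUt : U ≠ ∞ := by
    intro hcon
    have h1 : lpNormE n p u < ∞ :=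
      lt_of_le_of_lt hunorm (ENNReal.mul_lt_top (by norm_num) hfin)
    rw [hUnormE, hcon, ENNReal.top_rpow_of_pos (by positivity : (0:ℝ) < 1/p)] at h1
    exact lt_irrefl _ h1
  have hFu : ∀ x, F x ≤ u x := by
    intro x
    have := ENNReal.le_tsum (f := fun k => κ ^ k * Mseq k x) 0
    simpa [hM0] using this
  have hJF0 : (∫⁻ x, F x ^ p) ≠ 0 := by
    intro hz
    apply h0
    show (∫⁻ x, F x ^ p) ^ (1/p) = 0
    rw [hz, ENNReal.zero_rpow_of_pos (by positivity)]
  have hU0 : U ≠ 0 := by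
    intro hz
    apply hJF0
    refine le_antisymm ?_ (zero_le)
    rw [← hz, hU]
    exact lintegral_mono fun x => ENNReal.rpow_le_rpow (hFu x) hp0.le
  have huK : ∀ x, HLM n u x ≤ K * u x := by
    intro x
    calc HLM n u x ≤ ∑' k, HLM n (fun y => κ ^ k * Mseq k y) x :=
          HLM_tsum_le (fun k => measurable_const.mul (hMmeas k)) x
      _ ≤ ∑' k, κ ^ k * HLM n (Mseq k) x :=
          ENNReal.tsum_le_tsum fun k => HLM_const_mul_le _ (hMmeas k) x
      _ = ∑' k, κ ^ k * Mseq (k+1) x := tsum_congr fun k => by rw [hMsucc]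
      _ = ∑' k, K * (κ ^ (k+1) * Mseq (k+1) x) := by
          refine tsum_congr fun k => ?_
          have hcoef : K * κ ^ (k+1) = κ ^ k := by
            calc K * κ ^ (k+1) = (K * κ) * κ ^ k := by rw [pow_succ]; ring
              _ = κ ^ k := by rw [hκK, one_mul]
          rw [← mul_assoc, hcoef]
      _ = K * ∑' k, κ ^ (k+1) * Mseq (k+1) x := ENNReal.tsum_mul_left
      _ ≤ K * ∑' k, κ ^ k * Mseq k x := by
          refine mul_le_mul_right ?_ _
          exact ENNReal.summable.tsum_le_tsum_of_inj Nat.succ Nat.succ_injective (fun c _ => zero_le)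
            (fun k => le_rfl) ENNReal.summable
      _ = K * u x := rfl
  -- positivity of u
  have hFne : ¬ F =ᵐ[volume] (fun _ => 0) := by
    intro hFeq
    apply h0
    show lpNormE n p F = 0
    rw [lpNormE_congr_ae hFeq, lpNormE_zero hp0]
  obtain ⟨z₀, r₀, hr₀, hI₀⟩ := exists_ball_pos_integral hFm hFne
  set I₀ : ℝ≥0∞ := ∫⁻ y in Metric.closedBall z₀ r₀, F y with hI₀def
  have hJFt : (∫⁻ x, F x ^ p) ≠ ∞ := by
    intro hcon
    apply hUt
    refine top_le_iff.1 ?_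
    rw [← hcon, hU]
    exact lintegral_mono fun x => ENNReal.rpow_le_rpow (hFu x) hp0.le
  have hI₀t : I₀ ≠ ∞ := by
    refine ne_top_of_le_ne_top ?_ (setLIntegral_le_holder hp1 hFm (Metric.closedBall z₀ r₀))
    exact ENNReal.mul_ne_top (rpow_ne_top' hJF0 hJFt _)
      (rpow_ne_top' (cube_volume_pos (isCube_closedBall z₀ hr₀)).ne'
        (cube_volume_ne_top (isCube_closedBall z₀ hr₀)) _)
  -- lower bound for u on any ball
  set δ : (Fin n → ℝ) → ℝ → ℝ≥0∞ :=
    fun z r => κ * ((volume (Metric.closedBall z (r + dist z z₀ + r₀)))⁻¹ * I₀) with hδ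
  have hδ0 : ∀ z r, 0 < r → δ z r ≠ 0 := by
    intro z r hr
    have hRpos : 0 < r + dist z z₀ + r₀ := by
      have := dist_nonneg (x := z) (y := z₀); linarith
    exact mul_ne_zero hκ0 (mul_ne_zero
      (ENNReal.inv_ne_zero.2 (cube_volume_ne_top (isCube_closedBall z hRpos))) hI₀.ne')
  have hδt : ∀ z r, 0 < r → δ z r ≠ ∞ := by
    intro z r hr
    have hRpos : 0 < r + dist z z₀ + r₀ := by
      have := dist_nonneg (x := z) (y := z₀); linarith
    exact ENNReal.mul_ne_top hκt (ENNReal.mul_ne_top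
      (ENNReal.inv_ne_top.2 (cube_volume_pos (isCube_closedBall z hRpos)).ne') hI₀t)
  have hulow : ∀ (z : Fin n → ℝ) (r : ℝ), 0 < r → ∀ x ∈ Metric.closedBall z r,
      δ z r ≤ u x := by
    intro z r hr x hx
    have h1 := HLM_lower_bound F z hr z₀ hr₀ hx
    have h2 : κ * HLM n F x ≤ u x := by
      have hle := ENNReal.le_tsum (f := fun k => κ ^ k * Mseq k x) 1
      have hM1 : Mseq 1 = HLM n F := by rw [hMsucc 0, hM0]
      rw [pow_one, hM1] at hle
      exact hle
    exact le_trans (mul_le_mul_right h1 κ) h2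
  have hupos : ∀ x, u x ≠ 0 := by
    intro x
    refine ne_of_gt (lt_of_lt_of_le ?_ (hulow x 1 one_pos x (Metric.mem_closedBall_self zero_le_one)))
    exact (hδ0 x 1 one_pos).bot_lt
  -- the weight
  have hppneg : p - p₀ < 0 := by linarith
  set w : (Fin n → ℝ) → ℝ≥0∞ := fun x => u x ^ (p - p₀) with hw
  have hwm : Measurable w := by fun_prop
  have hIsW : IsWeight n w := by
    refine ⟨hwm, fun Q hQ => ?_⟩
    obtain ⟨z, r, hr, rfl⟩ := cube_eq_closedBall hQ
    have hpt : ∀ y ∈ Metric.closedBall z r, w y ≤ δ z r ^ (p - p₀) := by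
      intro y hy
      exact rpow_le_rpow_neg (hulow z r hr y hy) hppneg.le
    calc ∫⁻ y in Metric.closedBall z r, w y
        ≤ ∫⁻ _ in Metric.closedBall z r, δ z r ^ (p - p₀) := setLIntegral_mono measurable_const hpt
      _ = δ z r ^ (p - p₀) * volume (Metric.closedBall z r) := setLIntegral_const _ _
      _ < ∞ := ENNReal.mul_lt_top
          (rpow_ne_top' (hδ0 z r hr) (hδt z r hr) _).lt_top
          (cube_volume_ne_top (isCube_closedBall z hr)).lt_top
  -- Ap constant estimate
  have hAp : ApConst n p₀ w ≤ K ^ (p₀ - p) := by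
    refine iSup_le fun Q => iSup_le fun hQ => ?_
    obtain ⟨z, r, hr, rfl⟩ := cube_eq_closedBall hQ
    have hQc : IsCube n (Metric.closedBall z r) := isCube_closedBall z hr
    set V : ℝ≥0∞ := volume (Metric.closedBall z r) with hV
    have hV0 : V ≠ 0 := (cube_volume_pos hQc).ne'
    have hVt : V ≠ ∞ := cube_volume_ne_top hQc
    set I : ℝ≥0∞ := ∫⁻ y in Metric.closedBall z r, u y with hI
    have hIlow : δ z r * V ≤ I := by
      calc δ z r * V = ∫⁻ _ in Metric.closedBall z r, δ z r := (setLIntegral_const _ _).symm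
        _ ≤ I := setLIntegral_mono humeas (hulow z r hr)
    have hI0 : I ≠ 0 := by
      intro hz
      rw [hz] at hIlow
      exact (hδ0 z r hr) (by
        have := mul_eq_zero.1 (le_antisymm hIlow (zero_le))
        rcases this with h | h
        · exact h
        · exact absurd h hV0)
    have hIt : I ≠ ∞ := by
      refine ne_top_of_le_ne_top ?_ (setLIntegral_le_holder hp1 humeas _)
      exact ENNReal.mul_ne_top (rpow_ne_top' hU0 hUt _) (rpow_ne_top' hV0 hVt _)
    set Av : ℝ≥0∞ := setAvg n (Metric.closedBall z r) u with hAvdef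
    have hAveq : Av = V⁻¹ * I := rfl
    have hAv0 : Av ≠ 0 := by
      rw [hAveq]
      exact mul_ne_zero (ENNReal.inv_ne_zero.2 hVt) hI0
    have hAvt : Av ≠ ∞ := by
      rw [hAveq]
      exact ENNReal.mul_ne_top (ENNReal.inv_ne_top.2 hV0) hIt
    have hAvK : ∀ x ∈ Metric.closedBall z r, Av ≤ K * u x :=
      fun x hx => le_trans (setAvg_le_HLM hQc hx) (huK x)
    -- first factor
    have bound1 : setAvg n (Metric.closedBall z r) w ≤ K ^ (p₀ - p) * Av ^ (p - p₀) := by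
      have hptw : ∀ x ∈ Metric.closedBall z r, w x ≤ (κ * Av) ^ (p - p₀) := by
        intro x hx
        refine rpow_le_rpow_neg ?_ hppneg.le
        calc κ * Av ≤ κ * (K * u x) := mul_le_mul_right (hAvK x hx) _
          _ = (K * κ) * u x := by ring
          _ = u x := by rw [hκK, one_mul]
      have hsplit : (κ * Av) ^ (p - p₀) = K ^ (p₀ - p) * Av ^ (p - p₀) := by
        rw [ENNReal.mul_rpow_of_ne_zero hκ0 hAv0, hκ, ENNReal.inv_rpow, ← ENNReal.rpow_neg,
          show -(p - p₀) = p₀ - p by ring]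
      calc setAvg n (Metric.closedBall z r) w
          ≤ (volume (Metric.closedBall z r))⁻¹ *
            ∫⁻ _ in Metric.closedBall z r, (κ * Av) ^ (p - p₀) :=
            mul_le_mul_right (setLIntegral_mono measurable_const hptw) _
        _ = (κ * Av) ^ (p - p₀) := by
            rw [setLIntegral_const, ← hV, mul_comm ((κ * Av) ^ (p - p₀)) V, ← mul_assoc,
              ENNReal.inv_mul_cancel hV0 hVt, one_mul]
        _ = K ^ (p₀ - p) * Av ^ (p - p₀) := hsplit
    -- second factor (Jensen)
    set θ : ℝ := (p₀ - p)/(p₀ - 1) with hθ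
    have hθ0 : 0 < θ := div_pos (by linarith) (by linarith)
    have hθ1 : θ < 1 := by
      rw [hθ, div_lt_one (by linarith : (0:ℝ) < p₀ - 1)]
      linarith
    have hp₀1 : p₀ - 1 ≠ 0 := ne_of_gt (by linarith : (0:ℝ) < p₀ - 1)
    have hwθ : ∀ y, w y ^ (1 - p₀/(p₀-1)) = u y ^ θ := by
      intro y
      show (u y ^ (p - p₀)) ^ (1 - p₀/(p₀-1)) = u y ^ θ
      rw [← ENNReal.rpow_mul]
      congr 1
      rw [hθ]
      field_simp [hp₀1]
      try ring
    have bound2 : (setAvg n (Metric.closedBall z r) (fun y => w y ^ (1 - p₀/(p₀-1)))) ^ (p₀-1)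
        ≤ Av ^ (p₀ - p) := by
      have hjensen : setAvg n (Metric.closedBall z r) (fun y => u y ^ θ) ≤ Av ^ θ := by
        have hconj : (1/θ).HolderConjugate (1/(1-θ)) := by
          rw [Real.holderConjugate_iff]
          constructor
          · rw [lt_div_iff₀ hθ0, one_mul]
            exact hθ1
          · simp only [one_div, inv_inv]
            ring
        have hHold := ENNReal.lintegral_mul_le_Lp_mul_Lq
          (volume.restrict (Metric.closedBall z r)) hconj
          (by fun_prop : Measurable fun y => u y ^ θ).aemeasurable
          (aemeasurable_const (b := (1:ℝ≥0∞)))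
        simp only [Pi.mul_apply, mul_one, ENNReal.one_rpow] at hHold
        have e1 : ∀ y, (u y ^ θ) ^ (1/θ) = u y := by
          intro y
          rw [← ENNReal.rpow_mul, mul_one_div_cancel hθ0.ne', ENNReal.rpow_one]
        simp only [e1] at hHold
        have hHold2 : ∫⁻ y in Metric.closedBall z r, u y ^ θ ≤
            I ^ θ * V ^ (1-θ) := by
          refine hHold.trans (le_of_eq ?_)
          rw [setLIntegral_one, one_div_one_div, one_div_one_div, ← hI, ← hV]
        have hAvθ : Av ^ θ = V⁻¹ ^ θ * I ^ θ := by
          rw [hAveq, ENNReal.mul_rpow_of_ne_zero (ENNReal.inv_ne_zero.2 hVt) hI0]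
        have hVsplit : V⁻¹ = V⁻¹ ^ θ * V⁻¹ ^ (1-θ) := by
          rw [← ENNReal.rpow_add _ _ (ENNReal.inv_ne_zero.2 hVt) (ENNReal.inv_ne_top.2 hV0)]
          norm_num
        calc setAvg n (Metric.closedBall z r) (fun y => u y ^ θ)
            ≤ V⁻¹ * (I ^ θ * V ^ (1-θ)) := mul_le_mul_right hHold2 _
          _ = (V⁻¹ ^ θ * I ^ θ) * (V⁻¹ ^ (1-θ) * V ^ (1-θ)) := by
              conv_lhs => rw [hVsplit]
              ring
          _ = (V⁻¹ ^ θ * I ^ θ) * 1 := by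
              rw [← ENNReal.mul_rpow_of_nonneg _ _ (by linarith : (0:ℝ) ≤ 1-θ),
                ENNReal.inv_mul_cancel hV0 hVt, ENNReal.one_rpow]
          _ = Av ^ θ := by rw [mul_one, hAvθ]
      have heqfun : setAvg n (Metric.closedBall z r) (fun y => w y ^ (1 - p₀/(p₀-1))) =
          setAvg n (Metric.closedBall z r) (fun y => u y ^ θ) := by
        unfold setAvg
        congr 1
        exact lintegral_congr fun y => hwθ y
      rw [heqfun]
      calc (setAvg n (Metric.closedBall z r) (fun y => u y ^ θ)) ^ (p₀-1)
          ≤ (Av ^ θ) ^ (p₀-1) := ENNReal.rpow_le_rpow hjensen (by linarith)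
        _ = Av ^ (p₀ - p) := by
            rw [← ENNReal.rpow_mul]
            congr 1
            rw [hθ]
            exact div_mul_cancel₀ _ hp₀1
    calc setAvg n (Metric.closedBall z r) w *
          (setAvg n (Metric.closedBall z r) (fun y => w y ^ (1 - p₀/(p₀-1)))) ^ (p₀-1)
        ≤ (K ^ (p₀ - p) * Av ^ (p - p₀)) * Av ^ (p₀ - p) := mul_le_mul' bound1 bound2
      _ = K ^ (p₀ - p) * (Av ^ (p - p₀) * Av ^ (p₀ - p)) := by ring
      _ = K ^ (p₀ - p) := by
          rw [← ENNReal.rpow_add _ _ hAv0 hAvt, show p - p₀ + (p₀ - p) = 0 by ring,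
            ENNReal.rpow_zero, mul_one]
  have hApfin : ApConst n p₀ w < ∞ :=
    lt_of_le_of_lt hAp (rpow_ne_top' hK0 hKt _).lt_top
  -- the weighted norm of f
  have hwff : wLpNorm n p₀ w f ≤ U ^ (1/p₀) := by
    have hptw : ∀ x, F x ^ p₀ * w x ≤ u x ^ p := by
      intro x
      rcases eq_or_ne (u x) ∞ with htop | htop
      · have : w x = 0 := by
          rw [hw]
          simp only
          rw [htop, ENNReal.top_rpow_of_neg hppneg]
        rw [this, mul_zero]
        exact zero_le
      · calc F x ^ p₀ * w x ≤ u x ^ p₀ * u x ^ (p - p₀) :=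
            mul_le_mul_left (ENNReal.rpow_le_rpow (hFu x) hp₀0.le) _
          _ = u x ^ p := by
              rw [← ENNReal.rpow_add _ _ (hupos x) htop]
              congr 1
              ring
    show (∫⁻ x, F x ^ p₀ * w x) ^ (1/p₀) ≤ U ^ (1/p₀)
    exact ENNReal.rpow_le_rpow (lintegral_mono hptw) (by positivity)
  have hwfin : wLpNorm n p₀ w f < ∞ :=
    lt_of_le_of_lt hwff (ENNReal.rpow_lt_top_of_nonneg (by positivity) hUt)
  have hTw := hbound w hIsW hApfin f hf hwfin
  -- Hölder chain
  have hae_ufin : ∀ᵐ x ∂(volume : Measure (Fin n → ℝ)), u x ≠ ∞ := by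
    have := ae_lt_top (by fun_prop : Measurable fun x => u x ^ p) hUt
    refine this.mono fun x hx => ?_
    intro hcon
    rw [hcon, ENNReal.top_rpow_of_pos hp0] at hx
    exact lt_irrefl _ hx
  have hptT : ∀ᵐ x ∂(volume : Measure (Fin n → ℝ)),
      FT x ^ p = (FT x ^ p₀ * w x) ^ (p/p₀) * (u x ^ p) ^ ((p₀-p)/p₀) := by
    refine hae_ufin.mono fun x hx => ?_
    rw [ENNReal.mul_rpow_of_nonneg _ _ (by positivity : (0:ℝ) ≤ p/p₀),
      ← ENNReal.rpow_mul (FT x), show p₀ * (p/p₀) = p by field_simp,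
      ← ENNReal.rpow_mul (u x), ← ENNReal.rpow_mul (u x),
      mul_assoc, ← ENNReal.rpow_add _ _ (hupos x) hx,
      show (p - p₀) * (p/p₀) + p * ((p₀-p)/p₀) = 0 by field_simp; ring,
      ENNReal.rpow_zero, mul_one]
  have hconj2 : (p₀/p).HolderConjugate (p₀/(p₀-p)) := by
    rw [Real.holderConjugate_iff]
    constructor
    · rw [lt_div_iff₀ hp0, one_mul]
      exact hplt
    · rw [inv_div, inv_div, ← add_div, show p + (p₀ - p) = p₀ by ring,
        div_self (ne_of_gt hp₀0)]
  set A : ℝ≥0∞ := ∫⁻ x, FT x ^ p₀ * w x with hA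
  have hHold := ENNReal.lintegral_mul_le_Lp_mul_Lq (volume : Measure (Fin n → ℝ)) hconj2
    (by fun_prop : Measurable fun x => (FT x ^ p₀ * w x) ^ (p/p₀)).aemeasurable
    (by fun_prop : Measurable fun x => (u x ^ p) ^ ((p₀-p)/p₀)).aemeasurable
  simp only [Pi.mul_apply] at hHold
  have e1 : ∀ x : Fin n → ℝ, ((FT x ^ p₀ * w x) ^ (p/p₀)) ^ (p₀/p) = FT x ^ p₀ * w x := by
    intro x
    rw [← ENNReal.rpow_mul, show (p/p₀) * (p₀/p) = 1 by field_simp, ENNReal.rpow_one]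
  have e2 : ∀ x : Fin n → ℝ, ((u x ^ p) ^ ((p₀-p)/p₀)) ^ (p₀/(p₀-p)) = u x ^ p := by
    intro x
    have hppos : (0:ℝ) < p₀ - p := by linarith
    rw [← ENNReal.rpow_mul, show ((p₀-p)/p₀) * (p₀/(p₀-p)) = 1 by
      rw [div_mul_div_comm, mul_comm (p₀-p) p₀]
      exact div_self (mul_pos hp₀0 hppos).ne', ENNReal.rpow_one]
  simp only [e1, e2] at hHold
  have e3 : 1/(p₀/p) = p/p₀ := one_div_div _ _
  have e4 : 1/(p₀/(p₀-p)) = (p₀-p)/p₀ := one_div_div _ _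
  rw [e3, e4] at hHold
  have hchain : (∫⁻ x, FT x ^ p) ≤ A ^ (p/p₀) * U ^ ((p₀-p)/p₀) := by
    calc (∫⁻ x, FT x ^ p)
        = ∫⁻ x, (FT x ^ p₀ * w x) ^ (p/p₀) * (u x ^ p) ^ ((p₀-p)/p₀) :=
          lintegral_congr_ae hptT
      _ ≤ A ^ (p/p₀) * U ^ ((p₀-p)/p₀) := hHold
  -- conclude
  have hfinal : lpNorm n p (T f) ≤ c * K ^ ((p₀-p)*β) * (2 * lpNorm n p f) := by
    have hTnorm : lpNorm n p (T f) = (∫⁻ x, FT x ^ p) ^ (1/p) := rfl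
    have hwTA : wLpNorm n p₀ w (T f) = A ^ (1/p₀) := rfl
    have hsum_exp : (p/p₀) * (1/p) = 1/p₀ := by
      field_simp
      try ring
    have hsum_exp2 : ((p₀-p)/p₀) * (1/p) = (p₀-p)/(p₀*p) := by
      field_simp
      try ring
    calc lpNorm n p (T f) = (∫⁻ x, FT x ^ p) ^ (1/p) := hTnorm
      _ ≤ (A ^ (p/p₀) * U ^ ((p₀-p)/p₀)) ^ (1/p) :=
          ENNReal.rpow_le_rpow hchain (by positivity)
      _ = A ^ (1/p₀) * U ^ ((p₀-p)/(p₀*p)) := by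
          rw [ENNReal.mul_rpow_of_nonneg _ _ (by positivity : (0:ℝ) ≤ 1/p),
            ← ENNReal.rpow_mul A, ← ENNReal.rpow_mul U, hsum_exp, hsum_exp2]
      _ ≤ (c * ApConst n p₀ w ^ β * wLpNorm n p₀ w f) * U ^ ((p₀-p)/(p₀*p)) := by
          rw [← hwTA]
          exact mul_le_mul_left hTw _
      _ ≤ (c * K ^ ((p₀-p)*β) * U ^ (1/p₀)) * U ^ ((p₀-p)/(p₀*p)) := by
          refine mul_le_mul_left ?_ _
          refine mul_le_mul' (mul_le_mul_right ?_ _) hwff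
          calc ApConst n p₀ w ^ β ≤ (K ^ (p₀-p)) ^ β := ENNReal.rpow_le_rpow hAp hβ
            _ = K ^ ((p₀-p)*β) := by rw [← ENNReal.rpow_mul]
      _ = c * K ^ ((p₀-p)*β) * U ^ (1/p) := by
          rw [mul_assoc (c * K ^ ((p₀-p)*β)) _ _, ← ENNReal.rpow_add _ _ hU0 hUt]
          congr 2
          field_simp
          try ring
      _ ≤ c * K ^ ((p₀-p)*β) * (2 * lpNorm n p f) := by
          refine mul_le_mul_right ?_ _
          rw [← hUnormE]
          exact hunorm
  refine hfinal.trans ?_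
  have hKsplit : K ^ ((p₀-p)*β) = (2:ℝ≥0∞) ^ ((p₀-p)*β) * N ^ ((p₀-p)*β) := by
    rw [hK]
    exact ENNReal.mul_rpow_of_nonneg _ _ (mul_nonneg (by linarith) hβ)
  have h2le : (2:ℝ≥0∞) ^ ((p₀-p)*β) ≤ (2:ℝ≥0∞) ^ (β*p₀) :=
    ENNReal.rpow_le_rpow_of_exponent_le (by norm_num) (by nlinarith)
  calc c * K ^ ((p₀-p)*β) * (2 * lpNorm n p f)
      = c * ((2:ℝ≥0∞) ^ ((p₀-p)*β) * N ^ ((p₀-p)*β)) * (2 * lpNorm n p f) := by rw [hKsplit]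
    _ ≤ c * ((2:ℝ≥0∞) ^ (β*p₀) * N ^ ((p₀-p)*β)) * (2 * lpNorm n p f) := by
        refine mul_le_mul_left (mul_le_mul_right (mul_le_mul_left h2le _) _) _
    _ = ((2:ℝ≥0∞) ^ (β*p₀) * 2 * c * N ^ ((p₀-p)*β)) * lpNorm n p f := by ring
    _ = ((2:ℝ≥0∞) ^ (β*p₀) * 2 * c * N ^ (β*(p₀-p))) * lpNorm n p f := by
        rw [show (p₀-p)*β = β*(p₀-p) from mul_comm _ _]

end S2

/-- the weighted bound `‖Tf‖_{L^{p₀}(w)} ≤ c [w]_{A_{p₀}}^β ‖f‖_{L^{p₀}(w)}`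
implies the unweighted estimate `‖T‖_{L^p} ≤ c' ‖M‖_{L^p}^{β(p₀−p)}` for `1 < p < p₀`. -/
theorem statement2 (n : ℕ) (hn : 1 ≤ n) (p₀ : ℝ) (hp₀ : 1 < p₀)
    (β : ℝ) (hβ : 0 ≤ β)
    (T : ((Fin n → ℝ) → ℝ) → (Fin n → ℝ) → ℝ)
    (hT : ∀ f, Measurable f → Measurable (T f))
    (c : ℝ≥0∞) (hc0 : 0 < c) (hc : c < ∞)
    (hbound : ∀ w : (Fin n → ℝ) → ℝ≥0∞, IsWeight n w → ApConst n p₀ w < ∞ →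
      ∀ f : (Fin n → ℝ) → ℝ, Measurable f → wLpNorm n p₀ w f < ∞ →
        wLpNorm n p₀ w (T f) ≤ c * ApConst n p₀ w ^ β * wLpNorm n p₀ w f) :
    ∃ c' : ℝ≥0∞, 0 < c' ∧ c' < ∞ ∧ ∀ p : ℝ, 1 < p → p < p₀ →
      opNorm n p T ≤ c' * maximalOpNorm n p ^ (β * (p₀ - p)) := by
  refine ⟨(2:ℝ≥0∞) ^ (β * p₀) * 2 * c, ?_, ?_, ?_⟩
  · refine ENNReal.mul_pos (mul_ne_zero ?_ S2.two_ne_zero') hc0.ne'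
    exact (ENNReal.rpow_pos (by norm_num) S2.two_ne_top').ne'
  · exact (ENNReal.mul_ne_top (ENNReal.mul_ne_top
      (S2.rpow_ne_top' S2.two_ne_zero' S2.two_ne_top' _) S2.two_ne_top') hc.ne).lt_top
  · intro p hp1 hplt
    refine sInf_le ?_
    intro f hf hfin
    exact S2.main_estimate hn hp₀ hβ T hT c hbound hp1 hplt f hf hfin
end

section
/- Let n ≥ 1 and 1 < p₀ < ∞. Let φ : [1,∞) → [0,∞) be a nondecreasing function such that lim_{t→∞} φ(t)/t^{1/(p₀−1)} = 0. Then there is NO constant c > 0 such that for every weight w ∈ A_{p₀} and every f with ‖f‖_{L^{p₀}(w)} < ∞ one has ‖Mf‖_{L^{p₀}(w)} ≤ c φ([w]_{A_{p₀}}) ‖f‖_{L^{p₀}(w)}; i.e., Buckley's bound ‖M‖_{L^{p₀}(w)} ≤ c[w]_{A_{p₀}}^{1/(p₀−1)} admits no such improvement beyond the power scale. -/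
open MeasureTheory Filter
open scoped ENNReal NNReal

section AuxLemmas

open Set


lemma radd {x y δ : ℝ} (hx : 0 ≤ x) (hy : 0 ≤ y) (hδ : 0 ≤ δ) (hδ1 : δ ≤ 1) :
    (x + y) ^ δ ≤ x ^ δ + y ^ δ := by
  have := NNReal.rpow_add_le_add_rpow x.toNNReal y.toNNReal hδ hδ1
  have h1 : ((x.toNNReal + y.toNNReal : ℝ≥0) : ℝ) = x + y := by
    simp [Real.coe_toNNReal _ hx, Real.coe_toNNReal _ hy]
  calc (x + y) ^ δ = (((x.toNNReal + y.toNNReal : ℝ≥0) : ℝ)) ^ δ := by rw [h1]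
    _ = (((x.toNNReal + y.toNNReal) ^ δ : ℝ≥0) : ℝ) := by rw [← NNReal.coe_rpow]
    _ ≤ (((x.toNNReal ^ δ + y.toNNReal ^ δ : ℝ≥0)) : ℝ) := by exact_mod_cast this
    _ = x ^ δ + y ^ δ := by
        rw [NNReal.coe_add, NNReal.coe_rpow, NNReal.coe_rpow,
          Real.coe_toNNReal _ hx, Real.coe_toNNReal _ hy]

lemma lintegral_Icc_rpow {c : ℝ} (hc : -1 < c) {u v : ℝ} (hu : 0 ≤ u) (huv : u ≤ v) :
    ∫⁻ t in Icc u v, ENNReal.ofReal (t ^ c) =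
      ENNReal.ofReal ((v ^ (c + 1) - u ^ (c + 1)) / (c + 1)) := by
  have hint : IntegrableOn (fun t : ℝ => t ^ c) (Icc u v) volume := by
    rw [← intervalIntegrable_iff_integrableOn_Icc_of_le huv]
    exact intervalIntegral.intervalIntegrable_rpow' hc
  have hnn : 0 ≤ᵐ[volume.restrict (Icc u v)] fun t : ℝ => t ^ c := by
    filter_upwards [ae_restrict_mem measurableSet_Icc] with t ht
    exact Real.rpow_nonneg (le_trans hu ht.1) c
  rw [← MeasureTheory.ofReal_integral_eq_lintegral_ofReal hint hnn]
  congr 1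
  rw [MeasureTheory.integral_Icc_eq_integral_Ioc, ← intervalIntegral.integral_of_le huv,
    integral_rpow (Or.inl hc)]

lemma abs_congr {c u v : ℝ} (hu : 0 ≤ u) :
    ∫⁻ t in Icc u v, ENNReal.ofReal (|t| ^ c) = ∫⁻ t in Icc u v, ENNReal.ofReal (t ^ c) := by
  refine setLIntegral_congr_fun measurableSet_Icc (fun t ht => ?_)
  rw [abs_of_nonneg (le_trans hu ht.1)]

lemma reflect (c α β : ℝ) :
    ∫⁻ t in Icc α β, ENNReal.ofReal (|t| ^ c) =
      ∫⁻ t in Icc (-β) (-α), ENNReal.ofReal (|t| ^ c) := by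
  have mp : MeasurePreserving (fun x : ℝ => -x) volume volume :=
    Measure.measurePreserving_neg _
  have emb : MeasurableEmbedding (fun x : ℝ => -x) :=
    (Homeomorph.neg ℝ).measurableEmbedding
  have := mp.setLIntegral_comp_preimage_emb emb
    (fun t => ENNReal.ofReal (|t| ^ c)) (Icc (-β) (-α))
  rw [← this]
  have hpre : (fun x : ℝ => -x) ⁻¹' Icc (-β) (-α) = Icc α β := by
    ext x; simp [and_comm, neg_le, le_neg]
  rw [hpre]
  simp

lemma one_sided {δ h u : ℝ} (hδ : 0 < δ) (hδ1 : δ ≤ 1) (hu : 0 ≤ u) (hh : 0 ≤ h) :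
    ∫⁻ t in Icc u (u + h), ENNReal.ofReal (|t| ^ (δ - 1)) ≤ ENNReal.ofReal (h ^ δ / δ) := by
  rw [abs_congr hu, lintegral_Icc_rpow (by linarith) hu (by linarith)]
  apply ENNReal.ofReal_le_ofReal
  rw [sub_add_cancel]
  gcongr
  linarith [radd hu hh hδ.le hδ1]

lemma two_sided {δ h s : ℝ} (hδ : 0 < δ) (hδ1 : δ ≤ 1) (hh : 0 ≤ h) :
    ∫⁻ t in Icc s (s + h), ENNReal.ofReal (|t| ^ (δ - 1)) ≤
      2 * ENNReal.ofReal (h ^ δ / δ) := by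
  set u := max s 0 with hu
  set u' := max (-(s + h)) 0 with hu'
  have hsub : Icc s (s + h) ⊆ Icc u (u + h) ∪ Icc (-(u' + h)) (-u') := by
    intro t ht
    rcases le_or_gt 0 t with h0 | h0
    · left
      have hs : s ≤ u := le_max_left _ _
      exact ⟨max_le ht.1 h0, by linarith [ht.2]⟩
    · right
      have h1 : -(s + h) ≤ u' := le_max_left _ _
      have h2 : u' ≤ -t := max_le (by linarith [ht.2]) (by linarith)
      exact ⟨by linarith [ht.1], by linarith⟩
  calc ∫⁻ t in Icc s (s + h), ENNReal.ofReal (|t| ^ (δ - 1))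
      ≤ ∫⁻ t in Icc u (u + h) ∪ Icc (-(u' + h)) (-u'), ENNReal.ofReal (|t| ^ (δ - 1)) :=
        lintegral_mono_set hsub
    _ ≤ (∫⁻ t in Icc u (u + h), ENNReal.ofReal (|t| ^ (δ - 1))) +
        ∫⁻ t in Icc (-(u' + h)) (-u'), ENNReal.ofReal (|t| ^ (δ - 1)) := lintegral_union_le _ _ _
    _ ≤ ENNReal.ofReal (h ^ δ / δ) + ENNReal.ofReal (h ^ δ / δ) := by
        gcongr
        · exact one_sided hδ hδ1 (le_max_right _ _) hh
        · rw [reflect, neg_neg, neg_neg]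
          exact one_sided hδ hδ1 (le_max_right _ _) hh
    _ = 2 * ENNReal.ofReal (h ^ δ / δ) := (two_mul _).symm

lemma cube_lintegral {m : ℕ} (g : ℝ → ℝ≥0∞) (hg : Measurable g) (a : Fin (m + 1) → ℝ)
    (h : ℝ) :
    ∫⁻ y in {y : Fin (m + 1) → ℝ | ∀ i, y i ∈ Icc (a i) (a i + h)}, g (y 0) =
      (ENNReal.ofReal h) ^ m * ∫⁻ t in Icc (a 0) (a 0 + h), g t := by
  set Q : Set (Fin (m + 1) → ℝ) := {y | ∀ i, y i ∈ Icc (a i) (a i + h)} with hQdef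
  have hQmeas : MeasurableSet Q := by
    have : Q = Set.pi univ (fun i => Icc (a i) (a i + h)) := by
      ext y
      simp only [hQdef, Set.mem_setOf_eq, Set.mem_pi, Set.mem_univ, true_implies]
    rw [this]
    exact MeasurableSet.univ_pi fun i => measurableSet_Icc
  set T : Set (Fin m → ℝ) :=
    Set.pi univ (fun j => Icc (a ((0 : Fin (m+1)).succAbove j)) (a ((0 : Fin (m+1)).succAbove j) + h)) with hT
  have hTmeas : MeasurableSet T := MeasurableSet.univ_pi fun i => measurableSet_Icc
  set G : ℝ × (Fin m → ℝ) → ℝ≥0∞ :=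
    fun z => (Icc (a 0) (a 0 + h)).indicator g z.1 * T.indicator 1 z.2 with hG
  have hGmeas : Measurable G := by
    apply Measurable.mul
    · exact (hg.indicator measurableSet_Icc).comp measurable_fst
    · exact ((measurable_one.indicator hTmeas)).comp measurable_snd
  have mp := volume_preserving_piFinSuccAbove (fun _ : Fin (m + 1) => ℝ) 0
  set e := MeasurableEquiv.piFinSuccAbove (fun _ : Fin (m + 1) => ℝ) 0 with he
  have key : ∀ y : Fin (m + 1) → ℝ, Q.indicator (fun y => g (y 0)) y = G (e y) := by
    intro y
    have hey : e y = (y 0, fun j => y ((0 : Fin (m+1)).succAbove j)) := rfl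
    have hmem : y ∈ Q ↔ y 0 ∈ Icc (a 0) (a 0 + h) ∧
        (fun j => y ((0 : Fin (m+1)).succAbove j)) ∈ T := by
      rw [hQdef]
      simp only [Set.mem_setOf_eq, hT, Set.mem_pi, Set.mem_univ, forall_true_left]
      exact Fin.forall_iff_succAbove 0
    by_cases hy : y ∈ Q
    · rw [Set.indicator_of_mem hy, hG, hey]
      obtain ⟨h1, h2⟩ := hmem.mp hy
      simp only [Fin.succAbove_zero] at h2 ⊢
      simp [Set.indicator_of_mem h1, Set.indicator_of_mem h2]
    · rw [Set.indicator_of_notMem hy, hG, hey]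
      rw [hmem] at hy
      push_neg at hy
      by_cases h1 : y 0 ∈ Icc (a 0) (a 0 + h)
      · have := hy h1
        simp only [Fin.succAbove_zero] at this
        simp [Set.indicator_of_notMem this]
      · simp [Set.indicator_of_notMem h1]
  calc ∫⁻ y in Q, g (y 0)
      = ∫⁻ y, Q.indicator (fun y => g (y 0)) y := (lintegral_indicator hQmeas _).symm
    _ = ∫⁻ y, G (e y) := by simp_rw [key]
    _ = ∫⁻ z, G z := mp.lintegral_comp hGmeas
    _ = (∫⁻ t, (Icc (a 0) (a 0 + h)).indicator g t) * ∫⁻ z, T.indicator 1 z := by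
        rw [MeasureTheory.Measure.volume_eq_prod]
        exact lintegral_prod_mul ((hg.indicator measurableSet_Icc)).aemeasurable
          ((measurable_one.indicator hTmeas)).aemeasurable
    _ = (ENNReal.ofReal h) ^ m * ∫⁻ t in Icc (a 0) (a 0 + h), g t := by
        rw [lintegral_indicator measurableSet_Icc, lintegral_indicator hTmeas]
        rw [mul_comm]
        congr 1
        simp only [Pi.one_apply]
        rw [setLIntegral_one, hT, volume_pi, Measure.pi_pi]
        simp [Real.volume_Icc]

lemma cube_volume {m : ℕ} (a : Fin (m + 1) → ℝ) (h : ℝ) :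
    volume {y : Fin (m + 1) → ℝ | ∀ i, y i ∈ Icc (a i) (a i + h)} =
      (ENNReal.ofReal h) ^ (m + 1) := by
  have := cube_lintegral (fun _ => (1 : ℝ≥0∞)) measurable_const a h
  rw [← setLIntegral_one, this, setLIntegral_one, Real.volume_Icc, add_sub_cancel_left, pow_succ]

lemma hyperplane_null {m : ℕ} : volume {y : Fin (m + 1) → ℝ | y 0 = 0} = 0 := by
  rw [volume_pi]
  exact Measure.pi_hyperplane _ 0 0

lemma ae_ne_zero {m : ℕ} : ∀ᵐ y : Fin (m + 1) → ℝ, y 0 ≠ 0 := by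
  rw [ae_iff]
  convert hyperplane_null (m := m) using 2
  ext y; simp

lemma inv_ofReal_mul {h : ℝ} (hh : 0 < h) (r : ℝ) :
    (ENNReal.ofReal h)⁻¹ * ENNReal.ofReal r = ENNReal.ofReal (r / h) := by
  rw [← ENNReal.ofReal_inv_of_pos hh, ← ENNReal.ofReal_mul (by positivity), inv_mul_eq_div]




lemma cube_measurable {m : ℕ} (a : Fin (m + 1) → ℝ) (h : ℝ) :
    MeasurableSet {y : Fin (m + 1) → ℝ | ∀ i, y i ∈ Icc (a i) (a i + h)} := by
  have : {y : Fin (m + 1) → ℝ | ∀ i, y i ∈ Icc (a i) (a i + h)} =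
      Set.pi univ (fun i => Icc (a i) (a i + h)) := by
    ext y
    simp only [Set.mem_setOf_eq, Set.mem_pi, Set.mem_univ, true_implies]
  rw [this]
  exact MeasurableSet.univ_pi fun i => measurableSet_Icc

lemma cube_avg {m : ℕ} (g : ℝ → ℝ≥0∞) (hg : Measurable g) (a : Fin (m + 1) → ℝ) {h : ℝ}
    (hh : 0 < h) :
    setAvg (m+1) {y | ∀ i, y i ∈ Icc (a i) (a i + h)} (fun y => g (y 0)) =
      (ENNReal.ofReal h)⁻¹ * ∫⁻ t in Icc (a 0) (a 0 + h), g t := by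
  have h0 : (ENNReal.ofReal h) ≠ 0 := (ENNReal.ofReal_pos.mpr hh).ne'
  have htop : (ENNReal.ofReal h) ≠ ⊤ := ENNReal.ofReal_ne_top
  rw [setAvg, cube_volume a h, cube_lintegral g hg a h, pow_succ,
    ENNReal.mul_inv (Or.inl (pow_ne_zero m h0)) (Or.inr h0), mul_mul_mul_comm,
    ENNReal.inv_mul_cancel (pow_ne_zero m h0) (ENNReal.pow_ne_top htop), one_mul]


set_option maxHeartbeats 1000000 in

lemma key_estimate {m : ℕ} {p δ c : ℝ} (hp : 1 < p) (hδ : 0 < δ) (hδ1 : δ ≤ 1)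
    (hδp : p * δ ^ (p - 1) ≤ 1) (hc : 0 < c)
    {φ : ℝ → ℝ} (hφmono : MonotoneOn φ (Set.Ici 1)) (hφ0 : ∀ t, 1 ≤ t → 0 ≤ φ t)
    (H : ∀ w : (Fin (m+1) → ℝ) → ℝ≥0∞, IsWeight (m+1) w → ApConst (m+1) p w < ∞ →
      ∀ f : (Fin (m+1) → ℝ) → ℝ, Measurable f → wLpNorm (m+1) p w f < ∞ →
        wLpNormE (m+1) p w (HLM (m+1) fun y => (‖f y‖₊ : ℝ≥0∞)) ≤
          ENNReal.ofReal (c * φ ((ApConst (m+1) p w).toReal)) * wLpNorm (m+1) p w f) :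
    δ⁻¹ ≤ c * φ ((2:ℝ) ^ (2*p) * δ ^ (1-p)) := by
  have hp0 : (0:ℝ) < p := by linarith
  have hp1 : (0:ℝ) < p - 1 := by linarith
  set a : ℝ := (1 - δ) * (p - 1) with ha_def
  have ha0 : 0 ≤ a := mul_nonneg (by linarith) hp1.le
  have ha1 : a ≤ p - 1 := by nlinarith
  have haneg : (-1:ℝ) < a := by linarith
  have hae : a * (1 - p / (p - 1)) = δ - 1 := by
    rw [ha_def]
    field_simp
    ring
  set g1 : ℝ → ℝ≥0∞ := fun t => ENNReal.ofReal (|t| ^ a) with hg1_def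
  set gd : ℝ → ℝ≥0∞ := fun t => ENNReal.ofReal (|t| ^ (δ - 1)) with hgd_def
  set gS : ℝ → ℝ≥0∞ := fun t => ENNReal.ofReal (t ^ (δ - 1)) with hgS_def
  have hg1 : Measurable g1 := ENNReal.measurable_ofReal.comp (measurable_abs.pow_const a)
  have hgd : Measurable gd := ENNReal.measurable_ofReal.comp (measurable_abs.pow_const (δ - 1))
  have hgS : Measurable gS := ENNReal.measurable_ofReal.comp (measurable_id.pow_const (δ - 1))
  set w : (Fin (m+1) → ℝ) → ℝ≥0∞ := fun x => g1 (x 0) with hw_def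
  have hwmeas : Measurable w := hg1.comp (measurable_pi_apply 0)
  set z : Fin (m+1) → ℝ := fun _ => 0 with hz_def
  set S : Set (Fin (m+1) → ℝ) := {y | ∀ i, y i ∈ Icc (z i) (z i + 1)} with hS_def
  have hScube : IsCube (m+1) S := ⟨z, 1, one_pos, rfl⟩
  have hSmeas : MeasurableSet S := cube_measurable z 1
  have hSmem : ∀ y ∈ S, ∀ i, 0 ≤ y i ∧ y i ≤ 1 := by
    intro y hy i
    have := hy i
    simp only [hz_def, zero_add] at this
    exact ⟨this.1, this.2⟩
  set f : (Fin (m+1) → ℝ) → ℝ := S.indicator (fun x => (x 0) ^ (δ - 1)) with hf_def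
  have hbase : Measurable (fun x : Fin (m+1) → ℝ => (x 0) ^ (δ - 1)) :=
    (measurable_pi_apply 0).pow_const (δ - 1)
  have hfmeas : Measurable f := hbase.indicator hSmeas
  have h0ae : ∀ᵐ x : Fin (m+1) → ℝ, x 0 ≠ 0 := ae_ne_zero
  have hfnorm : ∀ x ∈ S, (‖f x‖₊ : ℝ≥0∞) = gS (x 0) := by
    intro x hx
    rw [hf_def, Set.indicator_of_mem hx,
      ← enorm_eq_nnnorm, Real.enorm_eq_ofReal (Real.rpow_nonneg (hSmem x hx 0).1 _)]
  -- core weighted integral computation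
  have hEcore : ∫⁻ x in S, (gS (x 0)) ^ p * w x = ENNReal.ofReal δ⁻¹ := by
    have hptwise : ∀ᵐ x ∂(volume.restrict S), (gS (x 0)) ^ p * w x = gS (x 0) := by
      filter_upwards [ae_restrict_mem hSmeas, ae_restrict_of_ae h0ae] with x hx hx0
      have hx0' : 0 < x 0 := lt_of_le_of_ne (hSmem x hx 0).1 (Ne.symm hx0)
      rw [hgS_def, hw_def, hg1_def]
      simp only
      rw [abs_of_pos hx0']
      rw [ENNReal.ofReal_rpow_of_pos (Real.rpow_pos_of_pos hx0' _),
        ← ENNReal.ofReal_mul (Real.rpow_nonneg (Real.rpow_nonneg hx0'.le _) _)]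
      congr 1
      rw [← Real.rpow_mul hx0'.le, ← Real.rpow_add hx0']
      congr 1
      rw [ha_def]; ring
    calc ∫⁻ x in S, (gS (x 0)) ^ p * w x
        = ∫⁻ x in S, gS (x 0) := lintegral_congr_ae hptwise
      _ = (ENNReal.ofReal 1) ^ m * ∫⁻ t in Icc (z 0) (z 0 + 1), gS t := by
          rw [hS_def]; exact cube_lintegral gS hgS z 1
      _ = ENNReal.ofReal δ⁻¹ := by
          have hz0 : z 0 = 0 := rfl
          rw [hz0, zero_add, hgS_def]
          rw [lintegral_Icc_rpow (by linarith) le_rfl (by norm_num)]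
          rw [sub_add_cancel, Real.one_rpow, Real.zero_rpow hδ.ne', ENNReal.ofReal_one,
            one_pow, one_mul]
          norm_num
  -- the weighted norm of f
  have hE : ∫⁻ x, ((‖f x‖₊ : ℝ≥0∞)) ^ p * w x = ENNReal.ofReal δ⁻¹ := by
    have hind : ∀ x, ((‖f x‖₊ : ℝ≥0∞)) ^ p * w x =
        S.indicator (fun x => ((‖f x‖₊ : ℝ≥0∞)) ^ p * w x) x := by
      intro x
      by_cases hx : x ∈ S
      · rw [Set.indicator_of_mem hx]
      · rw [Set.indicator_of_notMem hx, hf_def, Set.indicator_of_notMem hx]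
        simp [ENNReal.zero_rpow_of_pos hp0]
    calc ∫⁻ x, ((‖f x‖₊ : ℝ≥0∞)) ^ p * w x
        = ∫⁻ x in S, ((‖f x‖₊ : ℝ≥0∞)) ^ p * w x := by
          rw [← lintegral_indicator hSmeas]
          exact lintegral_congr hind
      _ = ∫⁻ x in S, (gS (x 0)) ^ p * w x := by
          refine setLIntegral_congr_fun hSmeas (fun x hx => ?_)
          rw [hfnorm x hx]
      _ = ENNReal.ofReal δ⁻¹ := hEcore
  set N : ℝ≥0∞ := (ENNReal.ofReal δ⁻¹) ^ (1/p) with hN_def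
  have hfLp : wLpNorm (m+1) p w f = N := by
    rw [wLpNorm, wLpNormE, hE, hN_def]
  have hNne0 : N ≠ 0 := by
    rw [hN_def]
    exact (ENNReal.rpow_pos (ENNReal.ofReal_pos.mpr (by positivity)) ENNReal.ofReal_ne_top).ne'
  have hNtop : N ≠ ⊤ := by
    rw [hN_def]
    exact ENNReal.rpow_ne_top_of_nonneg (by positivity) ENNReal.ofReal_ne_top
  -- the weight is a weight
  have hwW : IsWeight (m+1) w := by
    refine ⟨hwmeas, ?_⟩
    rintro Q ⟨b, h, hh, rfl⟩
    rw [hw_def]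
    rw [cube_lintegral g1 hg1 b h]
    have hb : ∫⁻ t in Icc (b 0) (b 0 + h), g1 t ≤
        ENNReal.ofReal ((max |b 0| |b 0 + h|) ^ a) * volume (Icc (b 0) (b 0 + h)) := by
      rw [← setLIntegral_const]
      refine setLIntegral_mono' measurableSet_Icc fun t ht => ?_
      rw [hg1_def]
      exact ENNReal.ofReal_le_ofReal
        (Real.rpow_le_rpow (abs_nonneg _) (abs_le_max_abs_abs ht.1 ht.2) ha0)
    have hfin : ∫⁻ t in Icc (b 0) (b 0 + h), g1 t < ⊤ :=
      lt_of_le_of_lt hb (by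
        rw [Real.volume_Icc]
        exact ENNReal.mul_lt_top ENNReal.ofReal_lt_top ENNReal.ofReal_lt_top)
    exact ENNReal.mul_lt_top (ENNReal.pow_ne_top ENNReal.ofReal_ne_top).lt_top hfin
  -- dual weight average over any cube
  have hdual : ∀ (b : Fin (m+1) → ℝ) (h : ℝ), 0 < h →
      setAvg (m+1) {y | ∀ i, y i ∈ Icc (b i) (b i + h)} (fun y => w y ^ (1 - p / (p - 1))) =
      (ENNReal.ofReal h)⁻¹ * ∫⁻ t in Icc (b 0) (b 0 + h), gd t := by
    intro b h hh
    have hcongr : setAvg (m+1) {y | ∀ i, y i ∈ Icc (b i) (b i + h)}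
          (fun y => w y ^ (1 - p / (p - 1))) =
        setAvg (m+1) {y | ∀ i, y i ∈ Icc (b i) (b i + h)} (fun y => gd (y 0)) := by
      rw [setAvg, setAvg]
      congr 1
      refine lintegral_congr_ae (ae_restrict_of_ae ?_)
      filter_upwards [h0ae] with y hy
      rw [hw_def, hg1_def, hgd_def]
      simp only
      have habs : 0 < |y 0| := abs_pos.mpr hy
      rw [ENNReal.ofReal_rpow_of_pos (Real.rpow_pos_of_pos habs _),
        ← Real.rpow_mul (abs_nonneg _), hae]
    rw [hcongr, cube_avg gd hgd b hh]
  -- upper bound for the Ap constant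
  have hApUB : ApConst (m+1) p w ≤ ENNReal.ofReal ((2:ℝ) ^ (2*p) * δ ^ (1-p)) := by
    rw [ApConst]
    refine iSup_le fun Q => iSup_le fun hQ => ?_
    obtain ⟨b, h, hh, rfl⟩ := hQ
    set s : ℝ := b 0 with hs_def
    set M : ℝ := max (max s (-(s + h))) 0 with hM_def
    have hM0 : 0 ≤ M := le_max_right _ _
    have hlow : ∀ t ∈ Icc s (s + h), M ≤ |t| := by
      intro t ht
      rcases le_or_gt 0 t with h0 | h0
      · rw [abs_of_nonneg h0]
        exact max_le (max_le ht.1 (by linarith [ht.2])) h0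
      · rw [abs_of_neg h0]
        exact max_le (max_le (by linarith [ht.1]) (by linarith [ht.2])) (by linarith)
    have hup : ∀ t ∈ Icc s (s + h), |t| ≤ M + h := by
      intro t ht
      have h1 : s ≤ M := le_trans (le_max_left _ _) (le_max_left _ _)
      have h2 : -(s + h) ≤ M := le_trans (le_max_right _ _) (le_max_left _ _)
      rcases le_or_gt 0 t with h0 | h0
      · rw [abs_of_nonneg h0]; linarith [ht.2]
      · rw [abs_of_neg h0]; linarith [ht.1]
    have havg1 : setAvg (m+1) {y | ∀ i, y i ∈ Icc (b i) (b i + h)} w ≤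
        ENNReal.ofReal ((M + h) ^ a) := by
      rw [hw_def, cube_avg g1 hg1 b hh]
      have hb : ∫⁻ t in Icc (b 0) (b 0 + h), g1 t ≤ ENNReal.ofReal ((M + h) ^ a * h) := by
        calc ∫⁻ t in Icc (b 0) (b 0 + h), g1 t
            ≤ ∫⁻ _ in Icc (b 0) (b 0 + h), ENNReal.ofReal ((M + h) ^ a) := by
              refine setLIntegral_mono' measurableSet_Icc fun t ht => ?_
              rw [hg1_def]
              exact ENNReal.ofReal_le_ofReal
                (Real.rpow_le_rpow (abs_nonneg _) (hup t ht) ha0)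
          _ = ENNReal.ofReal ((M + h) ^ a) * ENNReal.ofReal h := by
              rw [setLIntegral_const, Real.volume_Icc, add_sub_cancel_left]
          _ = ENNReal.ofReal ((M + h) ^ a * h) := (ENNReal.ofReal_mul (by positivity)).symm
      calc (ENNReal.ofReal h)⁻¹ * ∫⁻ t in Icc (b 0) (b 0 + h), g1 t
          ≤ (ENNReal.ofReal h)⁻¹ * ENNReal.ofReal ((M + h) ^ a * h) := mul_le_mul_right hb _
        _ = ENNReal.ofReal ((M + h) ^ a * h / h) := inv_ofReal_mul hh _
        _ = ENNReal.ofReal ((M + h) ^ a) := by rw [mul_div_assoc, div_self hh.ne', mul_one]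
    rw [hdual b h hh]
    rcases le_or_gt M h with hMh | hMh
    · -- the cube is close to the hyperplane
      have havg2 : (ENNReal.ofReal h)⁻¹ * ∫⁻ t in Icc (b 0) (b 0 + h), gd t ≤
          ENNReal.ofReal (2 * (h ^ δ / δ) / h) := by
        calc (ENNReal.ofReal h)⁻¹ * ∫⁻ t in Icc (b 0) (b 0 + h), gd t
            ≤ (ENNReal.ofReal h)⁻¹ * (2 * ENNReal.ofReal (h ^ δ / δ)) := by
              refine mul_le_mul_right ?_ _
              rw [hgd_def]
              exact two_sided hδ hδ1 hh.le
          _ = ENNReal.ofReal (2 * (h ^ δ / δ) / h) := by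
              rw [← ENNReal.ofReal_ofNat, ← ENNReal.ofReal_mul (by norm_num), inv_ofReal_mul hh]
      calc setAvg (m+1) {y | ∀ i, y i ∈ Icc (b i) (b i + h)} w *
            ((ENNReal.ofReal h)⁻¹ * ∫⁻ t in Icc (b 0) (b 0 + h), gd t) ^ (p - 1)
          ≤ ENNReal.ofReal ((M + h) ^ a) * (ENNReal.ofReal (2 * (h ^ δ / δ) / h)) ^ (p - 1) :=
            mul_le_mul' havg1 (ENNReal.rpow_le_rpow havg2 hp1.le)
        _ = ENNReal.ofReal ((M + h) ^ a * (2 * (h ^ δ / δ) / h) ^ (p - 1)) := by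
            rw [ENNReal.ofReal_rpow_of_pos (by positivity),
              ← ENNReal.ofReal_mul (by positivity)]
        _ ≤ ENNReal.ofReal ((2:ℝ) ^ (2*p) * δ ^ (1-p)) := by
            apply ENNReal.ofReal_le_ofReal
            have e1 : 2 * (h ^ δ / δ) / h = 2 * h ^ (δ-1) / δ := by
              rw [Real.rpow_sub hh, Real.rpow_one]; ring
            have e2 : (M + h) ^ a ≤ (2*h) ^ a :=
              Real.rpow_le_rpow (by positivity) (by linarith) ha0
            have e3 : ((2:ℝ)*h) ^ a = 2 ^ a * h ^ a := Real.mul_rpow (by norm_num) hh.le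
            have e4 : (2 * h ^ (δ-1) / δ) ^ (p-1) =
                (2:ℝ) ^ (p-1) * (h ^ (δ-1)) ^ (p-1) / δ ^ (p-1) := by
              rw [Real.div_rpow (by positivity) hδ.le, Real.mul_rpow (by norm_num) (by positivity)]
            have e5 : ((h:ℝ) ^ (δ-1)) ^ (p-1) = h ^ ((δ-1)*(p-1)) :=
              (Real.rpow_mul hh.le _ _).symm
            have e6 : (h:ℝ) ^ a * h ^ ((δ-1)*(p-1)) = 1 := by
              rw [← Real.rpow_add hh, show a + (δ-1)*(p-1) = 0 by rw [ha_def]; ring,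
                Real.rpow_zero]
            have e8 : δ ^ (1-p) = (δ ^ (p-1))⁻¹ := by
              rw [show (1-p) = -(p-1) by ring, Real.rpow_neg hδ.le]
            have e9 : (2:ℝ) ^ a * 2 ^ (p-1) ≤ 2 ^ (2*p) := by
              rw [← Real.rpow_add (by norm_num)]
              exact Real.rpow_le_rpow_of_exponent_le one_le_two (by linarith)
            calc (M + h) ^ a * (2 * (h ^ δ / δ) / h) ^ (p-1)
                = (M + h) ^ a * ((2:ℝ) ^ (p-1) * h ^ ((δ-1)*(p-1)) / δ ^ (p-1)) := by
                  rw [e1, e4, e5]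
              _ ≤ 2 ^ a * h ^ a * ((2:ℝ) ^ (p-1) * h ^ ((δ-1)*(p-1)) / δ ^ (p-1)) := by
                  apply mul_le_mul_of_nonneg_right (e2.trans_eq e3)
                  positivity
              _ = ((2:ℝ) ^ a * 2 ^ (p-1)) * ((h:ℝ) ^ a * h ^ ((δ-1)*(p-1))) * (δ ^ (p-1))⁻¹ := by
                  ring
              _ = ((2:ℝ) ^ a * 2 ^ (p-1)) * (δ ^ (p-1))⁻¹ := by rw [e6, mul_one]
              _ ≤ (2:ℝ) ^ (2*p) * (δ ^ (p-1))⁻¹ := by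
                  apply mul_le_mul_of_nonneg_right e9
                  positivity
              _ = (2:ℝ) ^ (2*p) * δ ^ (1-p) := by rw [e8]
    · -- the cube is far from the hyperplane
      have hMpos : 0 < M := hh.trans hMh
      have havg2 : (ENNReal.ofReal h)⁻¹ * ∫⁻ t in Icc (b 0) (b 0 + h), gd t ≤
          ENNReal.ofReal (M ^ (δ-1)) := by
        have hbd : ∫⁻ t in Icc (b 0) (b 0 + h), gd t ≤ ENNReal.ofReal (M ^ (δ-1) * h) := by
          calc ∫⁻ t in Icc (b 0) (b 0 + h), gd t
              ≤ ∫⁻ _ in Icc (b 0) (b 0 + h), ENNReal.ofReal (M ^ (δ-1)) := by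
                refine setLIntegral_mono' measurableSet_Icc fun t ht => ?_
                rw [hgd_def]
                exact ENNReal.ofReal_le_ofReal
                  (Real.rpow_le_rpow_of_nonpos hMpos (hlow t ht) (by linarith))
            _ = ENNReal.ofReal (M ^ (δ-1)) * ENNReal.ofReal h := by
                rw [setLIntegral_const, Real.volume_Icc, add_sub_cancel_left]
            _ = ENNReal.ofReal (M ^ (δ-1) * h) := (ENNReal.ofReal_mul (by positivity)).symm
        calc (ENNReal.ofReal h)⁻¹ * ∫⁻ t in Icc (b 0) (b 0 + h), gd t
            ≤ (ENNReal.ofReal h)⁻¹ * ENNReal.ofReal (M ^ (δ-1) * h) := mul_le_mul_right hbd _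
          _ = ENNReal.ofReal (M ^ (δ-1) * h / h) := inv_ofReal_mul hh _
          _ = ENNReal.ofReal (M ^ (δ-1)) := by rw [mul_div_assoc, div_self hh.ne', mul_one]
      calc setAvg (m+1) {y | ∀ i, y i ∈ Icc (b i) (b i + h)} w *
            ((ENNReal.ofReal h)⁻¹ * ∫⁻ t in Icc (b 0) (b 0 + h), gd t) ^ (p - 1)
          ≤ ENNReal.ofReal ((M + h) ^ a) * (ENNReal.ofReal (M ^ (δ-1))) ^ (p - 1) :=
            mul_le_mul' havg1 (ENNReal.rpow_le_rpow havg2 hp1.le)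
        _ = ENNReal.ofReal ((M + h) ^ a * (M ^ (δ-1)) ^ (p-1)) := by
            rw [ENNReal.ofReal_rpow_of_pos (by positivity),
              ← ENNReal.ofReal_mul (by positivity)]
        _ ≤ ENNReal.ofReal ((2:ℝ) ^ (2*p) * δ ^ (1-p)) := by
            apply ENNReal.ofReal_le_ofReal
            have e2 : (M + h) ^ a ≤ (2*M) ^ a :=
              Real.rpow_le_rpow (by positivity) (by linarith) ha0
            have e3 : ((2:ℝ)*M) ^ a = 2 ^ a * M ^ a := Real.mul_rpow (by norm_num) hM0
            have e5 : ((M:ℝ) ^ (δ-1)) ^ (p-1) = M ^ ((δ-1)*(p-1)) :=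
              (Real.rpow_mul hM0 _ _).symm
            have e6 : (M:ℝ) ^ a * M ^ ((δ-1)*(p-1)) = 1 := by
              rw [← Real.rpow_add hMpos, show a + (δ-1)*(p-1) = 0 by rw [ha_def]; ring,
                Real.rpow_zero]
            have e9 : (2:ℝ) ^ a ≤ 2 ^ (2*p) :=
              Real.rpow_le_rpow_of_exponent_le one_le_two (by linarith)
            have e10 : (1:ℝ) ≤ δ ^ (1-p) :=
              Real.one_le_rpow_of_pos_of_le_one_of_nonpos hδ hδ1 (by linarith)
            calc (M + h) ^ a * ((M:ℝ) ^ (δ-1)) ^ (p-1)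
                ≤ (2 ^ a * M ^ a) * M ^ ((δ-1)*(p-1)) := by
                  rw [e5]
                  exact mul_le_mul_of_nonneg_right (e2.trans_eq e3) (by positivity)
              _ = 2 ^ a := by rw [mul_assoc, e6, mul_one]
              _ ≤ (2:ℝ) ^ (2*p) := e9
              _ ≤ (2:ℝ) ^ (2*p) * δ ^ (1-p) := le_mul_of_one_le_right (by positivity) e10
  have hApfin : ApConst (m+1) p w < ∞ := lt_of_le_of_lt hApUB ENNReal.ofReal_lt_top
  -- lower bound for the Ap constant
  have hApLB : ENNReal.ofReal (p⁻¹ * δ ^ (1-p)) ≤ ApConst (m+1) p w := by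
    rw [ApConst]
    refine le_iSup_of_le S (le_iSup_of_le hScube ?_)
    have hv1 : setAvg (m+1) S w = ENNReal.ofReal (1/(a+1)) := by
      rw [hS_def, hw_def, cube_avg g1 hg1 z one_pos]
      have hz0 : z 0 = 0 := rfl
      rw [hz0, zero_add, hg1_def]
      rw [abs_congr le_rfl, lintegral_Icc_rpow haneg le_rfl (by norm_num)]
      rw [Real.one_rpow, Real.zero_rpow (by linarith), ENNReal.ofReal_one, inv_one, one_mul,
        sub_zero]
    have hv2 : setAvg (m+1) S (fun y => w y ^ (1 - p / (p - 1))) = ENNReal.ofReal (1/δ) := by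
      rw [hS_def, hdual z 1 one_pos]
      have hz0 : z 0 = 0 := rfl
      rw [hz0, zero_add, hgd_def]
      rw [abs_congr le_rfl, lintegral_Icc_rpow (by linarith) le_rfl (by norm_num)]
      rw [sub_add_cancel, Real.one_rpow, Real.zero_rpow hδ.ne', ENNReal.ofReal_one, inv_one,
        one_mul, sub_zero]
    rw [hv1, hv2]
    rw [ENNReal.ofReal_rpow_of_pos (by positivity), ← ENNReal.ofReal_mul (by positivity)]
    apply ENNReal.ofReal_le_ofReal
    have hinv : ((1:ℝ)/δ) ^ (p-1) = δ ^ (1-p) := by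
      rw [one_div, ← Real.rpow_neg_one δ, ← Real.rpow_mul hδ.le]
      congr 1
      ring
    rw [hinv]
    apply mul_le_mul_of_nonneg_right ?_ (by positivity)
    rw [one_div]
    exact inv_anti₀ (by linarith) (by linarith)
  set A : ℝ := (ApConst (m+1) p w).toReal with hA_def
  have hAub : A ≤ (2:ℝ) ^ (2*p) * δ ^ (1-p) := by
    rw [hA_def]
    exact ENNReal.toReal_le_of_le_ofReal (by positivity) hApUB
  have hAlb : p⁻¹ * δ ^ (1-p) ≤ A := by
    have h2 := ENNReal.toReal_mono hApfin.ne hApLB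
    rwa [ENNReal.toReal_ofReal (by positivity)] at h2
  have h1A : (1:ℝ) ≤ p⁻¹ * δ ^ (1-p) := by
    have e8 : δ ^ (1-p) = (δ ^ (p-1))⁻¹ := by
      rw [show (1-p) = -(p-1) by ring, Real.rpow_neg hδ.le]
    rw [e8, ← mul_inv]
    rw [one_le_inv_iff₀]
    exact ⟨by positivity, hδp⟩
  have hA1 : (1:ℝ) ≤ A := le_trans h1A hAlb
  -- pointwise lower bound for the maximal function
  have hHLM : ∀ x ∈ S, 0 < x 0 →
      ENNReal.ofReal ((x 0) ^ (δ-1) * δ⁻¹) ≤ HLM (m+1) (fun y => (‖f y‖₊ : ℝ≥0∞)) x := by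
    intro x hx hx0
    have hle1 : x 0 ≤ 1 := (hSmem x hx 0).2
    set b : Fin (m+1) → ℝ := fun i => if i = 0 then 0 else max (x i - x 0) 0 with hb_def
    set QX : Set (Fin (m+1) → ℝ) := {y | ∀ i, y i ∈ Icc (b i) (b i + x 0)} with hQX_def
    have hQXcube : IsCube (m+1) QX := ⟨b, x 0, hx0, rfl⟩
    have hb0 : b 0 = 0 := by rw [hb_def]; simp
    have hxQX : x ∈ QX := by
      intro i
      by_cases hi : i = 0
      · subst hi
        rw [hb0]
        exact ⟨hx0.le, by linarith⟩
      · simp only [hb_def, if_neg hi]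
        refine ⟨max_le (by linarith) (hSmem x hx i).1, ?_⟩
        rcases le_or_gt (x i - x 0) 0 with hcc | hcc
        · rw [max_eq_right hcc]; linarith [(hSmem x hx i).1]
        · rw [max_eq_left hcc.le]; linarith
    have hsubS : QX ⊆ S := by
      intro y hy i
      have hyi := hy i
      by_cases hi : i = 0
      · subst hi
        rw [hb0] at hyi
        have : y 0 ∈ Icc (0:ℝ) 1 := ⟨hyi.1, by linarith [hyi.2]⟩
        simpa [hz_def] using this
      · simp only [hb_def, if_neg hi] at hyi
        have hyi1 : 0 ≤ y i := le_trans (le_max_right _ _) hyi.1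
        have hyi2 : y i ≤ 1 := by
          have : max (x i - x 0) 0 + x 0 ≤ 1 := by
            rcases le_or_gt (x i - x 0) 0 with hcc | hcc
            · rw [max_eq_right hcc]; linarith
            · rw [max_eq_left hcc.le]; linarith [(hSmem x hx i).2]
          linarith [hyi.2]
        have : y i ∈ Icc (0:ℝ) 1 := ⟨hyi1, hyi2⟩
        simpa [hz_def] using this
    have havg : setAvg (m+1) QX (fun y => (‖f y‖₊ : ℝ≥0∞)) =
        ENNReal.ofReal ((x 0) ^ (δ-1) * δ⁻¹) := by
      have hcong : setAvg (m+1) QX (fun y => (‖f y‖₊ : ℝ≥0∞)) =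
          setAvg (m+1) QX (fun y => gS (y 0)) := by
        rw [setAvg, setAvg]
        congr 1
        rw [hQX_def]
        refine setLIntegral_congr_fun (cube_measurable b (x 0)) (fun y hy => ?_)
        exact hfnorm y (hsubS hy)
      rw [hcong, hQX_def, cube_avg gS hgS b hx0]
      rw [hb0, zero_add, hgS_def]
      rw [lintegral_Icc_rpow (by linarith) le_rfl hx0.le]
      rw [sub_add_cancel, Real.zero_rpow hδ.ne', sub_zero]
      rw [inv_ofReal_mul hx0]
      congr 1
      rw [Real.rpow_sub hx0, Real.rpow_one]
      field_simp
    calc ENNReal.ofReal ((x 0) ^ (δ-1) * δ⁻¹)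
        = setAvg (m+1) QX (fun y => (‖f y‖₊ : ℝ≥0∞)) := havg.symm
      _ ≤ HLM (m+1) (fun y => (‖f y‖₊ : ℝ≥0∞)) x := by
          rw [HLM]
          exact le_iSup_of_le QX (le_iSup_of_le hQXcube (le_iSup_of_le hxQX le_rfl))
  -- lower bound for the left-hand side
  have hwfin : wLpNorm (m+1) p w f < ∞ := by rw [hfLp]; exact hNtop.lt_top
  have Hu := H w hwW hApfin f hfmeas hwfin
  rw [hfLp] at Hu
  have hLHS : ENNReal.ofReal δ⁻¹ * N ≤
      wLpNormE (m+1) p w (HLM (m+1) fun y => (‖f y‖₊ : ℝ≥0∞)) := by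
    have hXne : (ENNReal.ofReal δ⁻¹) ^ p ≠ ⊤ :=
      ENNReal.rpow_ne_top_of_nonneg hp0.le ENNReal.ofReal_ne_top
    have hint : (ENNReal.ofReal δ⁻¹) ^ p * ENNReal.ofReal δ⁻¹ ≤
        ∫⁻ x, (HLM (m+1) (fun y => (‖f y‖₊ : ℝ≥0∞)) x) ^ p * w x := by
      calc (ENNReal.ofReal δ⁻¹) ^ p * ENNReal.ofReal δ⁻¹
          = ∫⁻ x in S, (ENNReal.ofReal δ⁻¹) ^ p * ((gS (x 0)) ^ p * w x) := by
            rw [lintegral_const_mul' _ _ hXne, hEcore]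
        _ = ∫⁻ x in S, (ENNReal.ofReal ((x 0) ^ (δ-1) * δ⁻¹)) ^ p * w x := by
            refine setLIntegral_congr_fun hSmeas (fun x hx => ?_)
            rw [ENNReal.ofReal_mul (Real.rpow_nonneg (hSmem x hx 0).1 _),
              ENNReal.mul_rpow_of_nonneg _ _ hp0.le]
            simp only [hgS_def]
            ring
        _ ≤ ∫⁻ x in S, (HLM (m+1) (fun y => (‖f y‖₊ : ℝ≥0∞)) x) ^ p * w x := by
            refine setLIntegral_mono_ae' hSmeas ?_
            filter_upwards [h0ae] with x hx0 hxS
            have hx0' : 0 < x 0 := lt_of_le_of_ne (hSmem x hxS 0).1 (Ne.symm hx0)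
            exact mul_le_mul_left (ENNReal.rpow_le_rpow (hHLM x hxS hx0') hp0.le) _
        _ ≤ ∫⁻ x, (HLM (m+1) (fun y => (‖f y‖₊ : ℝ≥0∞)) x) ^ p * w x :=
            setLIntegral_le_lintegral _ _
    calc ENNReal.ofReal δ⁻¹ * N
        = ((ENNReal.ofReal δ⁻¹) ^ p * ENNReal.ofReal δ⁻¹) ^ (1/p) := by
          rw [ENNReal.mul_rpow_of_nonneg _ _ (by positivity : (0:ℝ) ≤ 1/p),
            ← ENNReal.rpow_mul, mul_one_div_cancel hp0.ne', ENNReal.rpow_one, hN_def]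
      _ ≤ (∫⁻ x, (HLM (m+1) (fun y => (‖f y‖₊ : ℝ≥0∞)) x) ^ p * w x) ^ (1/p) :=
          ENNReal.rpow_le_rpow hint (by positivity)
      _ = wLpNormE (m+1) p w (HLM (m+1) fun y => (‖f y‖₊ : ℝ≥0∞)) := by rw [wLpNormE]
  have hfinal := le_trans hLHS Hu
  have hcphi : ENNReal.ofReal δ⁻¹ ≤ ENNReal.ofReal (c * φ A) :=
    (ENNReal.mul_le_mul_iff_left hNne0 hNtop).mp hfinal
  have hφA : δ⁻¹ ≤ c * φ A := by
    rwa [ENNReal.ofReal_le_ofReal_iff (mul_nonneg hc.le (hφ0 A hA1))] at hcphi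
  have hmono : φ A ≤ φ ((2:ℝ) ^ (2*p) * δ ^ (1-p)) :=
    hφmono (Set.mem_Ici.mpr hA1) (Set.mem_Ici.mpr (le_trans hA1 hAub)) hAub
  calc δ⁻¹ ≤ c * φ A := hφA
    _ ≤ c * φ ((2:ℝ) ^ (2*p) * δ ^ (1-p)) := mul_le_mul_of_nonneg_left hmono hc.le

end AuxLemmas

/-- Buckley's bound for the maximal function admits no improvement beyond
the power scale: if `φ : [1,∞) → [0,∞)` is nondecreasing with
`φ(t)/t^{1/(p₀−1)} → 0` as `t → ∞`, there is no constant `c > 0` with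
`‖Mf‖_{L^{p₀}(w)} ≤ c φ([w]_{A_{p₀}}) ‖f‖_{L^{p₀}(w)}` for all `w ∈ A_{p₀}`. -/
theorem statement6 (n : ℕ) (hn : 1 ≤ n) (p₀ : ℝ) (hp₀ : 1 < p₀)
    (φ : ℝ → ℝ) (hφmono : MonotoneOn φ (Set.Ici 1)) (hφ0 : ∀ t, 1 ≤ t → 0 ≤ φ t)
    (hφlim : Tendsto (fun t : ℝ => φ t / t ^ (1 / (p₀ - 1))) atTop (nhds 0)) :
    ¬ ∃ c : ℝ, 0 < c ∧ ∀ w : (Fin n → ℝ) → ℝ≥0∞, IsWeight n w → ApConst n p₀ w < ∞ →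
      ∀ f : (Fin n → ℝ) → ℝ, Measurable f → wLpNorm n p₀ w f < ∞ →
        wLpNormE n p₀ w (HLM n fun y => (‖f y‖₊ : ℝ≥0∞)) ≤
          ENNReal.ofReal (c * φ ((ApConst n p₀ w).toReal)) * wLpNorm n p₀ w f := by
  rintro ⟨c, hc, H⟩
  obtain ⟨m, rfl⟩ : ∃ m, n = m + 1 := ⟨n - 1, by omega⟩
  have hp1 : (0:ℝ) < p₀ - 1 := by linarith
  set C : ℝ := (2:ℝ) ^ (2 * p₀) with hC_def
  have hCpos : 0 < C := Real.rpow_pos_of_pos two_pos _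
  set ε : ℝ := (c * C ^ (1/(p₀-1)))⁻¹ with hε_def
  have hεpos : 0 < ε := by
    rw [hε_def]
    positivity
  have hev : ∀ᶠ t in atTop, φ t / t ^ (1/(p₀-1)) < ε :=
    hφlim.eventually_lt_const hεpos
  obtain ⟨t₀, ht1, ht2⟩ := (hev.and (eventually_ge_atTop (max (p₀ * C) C))).exists
  have ht₀pos : 0 < t₀ := lt_of_lt_of_le hCpos (le_trans (le_max_right _ _) ht2)
  have hCt₀ : 0 < C / t₀ := div_pos hCpos ht₀pos
  set δ : ℝ := (C / t₀) ^ (1/(p₀-1)) with hδ_def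
  have hδpos : 0 < δ := Real.rpow_pos_of_pos hCt₀ _
  have hδpow : δ ^ (p₀ - 1) = C / t₀ := by
    rw [hδ_def, ← Real.rpow_mul hCt₀.le, one_div, inv_mul_cancel₀ hp1.ne', Real.rpow_one]
  have hCt : C / t₀ ≤ 1 := by
    rw [div_le_one ht₀pos]; exact le_trans (le_max_right _ _) ht2
  have hδ1 : δ ≤ 1 := by
    rw [hδ_def]; exact Real.rpow_le_one hCt₀.le hCt (by positivity)
  have hδp : p₀ * δ ^ (p₀-1) ≤ 1 := by
    rw [hδpow, show p₀ * (C / t₀) = (p₀ * C) / t₀ by ring, div_le_one ht₀pos]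
    exact le_trans (le_max_left _ _) ht2
  have hδinv : δ ^ (1 - p₀) = t₀ / C := by
    rw [show (1:ℝ) - p₀ = -(p₀-1) by ring, Real.rpow_neg hδpos.le, hδpow, inv_div]
  have hkey := key_estimate hp₀ hδpos hδ1 hδp hc hφmono hφ0 H
  rw [← hC_def, hδinv, show C * (t₀ / C) = t₀ by field_simp] at hkey
  have hδinv' : δ⁻¹ = (t₀ / C) ^ (1/(p₀-1)) := by
    rw [hδ_def, ← Real.inv_rpow hCt₀.le, inv_div]
  have hpow : 0 < t₀ ^ (1/(p₀-1)) := Real.rpow_pos_of_pos ht₀pos _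
  have ht1' : φ t₀ < ε * t₀ ^ (1/(p₀-1)) := by
    calc φ t₀ = (φ t₀ / t₀ ^ (1/(p₀-1))) * t₀ ^ (1/(p₀-1)) := by field_simp
      _ < ε * t₀ ^ (1/(p₀-1)) := mul_lt_mul_of_pos_right ht1 hpow
  have hlow : (t₀/C) ^ (1/(p₀-1)) ≤ c * φ t₀ := by rw [← hδinv']; exact hkey
  have hsplit : (t₀/C) ^ (1/(p₀-1)) = t₀ ^ (1/(p₀-1)) / C ^ (1/(p₀-1)) :=
    Real.div_rpow ht₀pos.le hCpos.le _
  have hce : c * ε = (C ^ (1/(p₀-1)))⁻¹ := by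
    rw [hε_def, mul_inv]
    rw [← mul_assoc, mul_inv_cancel₀ hc.ne', one_mul]
  have hfin : t₀ ^ (1/(p₀-1)) / C ^ (1/(p₀-1)) < t₀ ^ (1/(p₀-1)) / C ^ (1/(p₀-1)) := by
    calc t₀ ^ (1/(p₀-1)) / C ^ (1/(p₀-1)) ≤ c * φ t₀ := by rw [← hsplit]; exact hlow
      _ < c * (ε * t₀ ^ (1/(p₀-1))) := mul_lt_mul_of_pos_left ht1' hc
      _ = t₀ ^ (1/(p₀-1)) / C ^ (1/(p₀-1)) := by
          rw [← mul_assoc, hce]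
          exact (div_eq_inv_mul _ _).symm
  exact absurd hfin (lt_irrefl _)
end
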